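/- arXiv:1009.5535 — 9 statements merged into one kernel-verified Lean document; each statement's English description precedes it below -/
import Mathlib

section
/- Let X be a real Banach space, let (A_n) be an approximation scheme in X, and let Y be a closed linear subspace of X (with the norm inherited from X). If Y is far from (A_n), i.e., there exists c > 0 with E(S(Y), A_n) ≥ c for every n, then Y satisfies Shapiro's Theorem relative to (A_n): for every nonincreasing sequence of nonnegative reals ε_n → 0 there exists y ∈ Y such that there is no constant C with E(y,A_n) ≤ C ε_n for all n. -/
open Metric Filter Pointwise

/-- `(A, K)` is an approximation scheme on `X`: the sets `A n` form a strictly increasing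
chain, `A n + A n ⊆ A (K n)` with `K n ≥ n`, each `A n` is closed under scalar
multiplication, and `⋃ n, A n` is dense in `X`. -/
def IsApproximationScheme {X : Type*} [NormedAddCommGroup X] [NormedSpace ℝ X]
    (A : ℕ → Set X) (K : ℕ → ℕ) : Prop :=
  (∀ n, A n ⊂ A (n + 1)) ∧
  (∀ n, n ≤ K n ∧ A n + A n ⊆ A (K n)) ∧
  (∀ (n : ℕ) (c : ℝ), c • A n ⊆ A n) ∧
  Dense (⋃ n, A n)

/-- Admissible error sequences: nonnegative, nonincreasing, tending to `0`. -/
def NullSeq (ε : ℕ → ℝ) : Prop :=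
  (∀ n, 0 ≤ ε n) ∧ Antitone ε ∧ Tendsto ε atTop (nhds 0)

/-- Subadditivity of `infDist` with respect to `A n + A n ⊆ A (K n)`. -/
lemma infDist_add_le {X : Type*} [NormedAddCommGroup X]
    {s t : Set X} (hst : s + s ⊆ t) (hs : s.Nonempty) (x₁ x₂ : X) :
    infDist (x₁ + x₂) t ≤ infDist x₁ s + infDist x₂ s := by
  refine le_of_forall_sub_le fun δ hδ => ?_
  obtain ⟨a, ha, hda⟩ := (infDist_lt_iff hs).1
    (lt_add_of_pos_right (infDist x₁ s) (half_pos hδ))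
  obtain ⟨b, hb, hdb⟩ := (infDist_lt_iff hs).1
    (lt_add_of_pos_right (infDist x₂ s) (half_pos hδ))
  have hmem : a + b ∈ t := hst (Set.add_mem_add ha hb)
  have h1 : infDist (x₁ + x₂) t ≤ dist (x₁ + x₂) (a + b) := infDist_le_dist_of_mem hmem
  have h2 : dist (x₁ + x₂) (a + b) ≤ dist x₁ a + dist x₂ b := by
    simp only [dist_eq_norm, add_sub_add_comm]
    exact norm_add_le _ _
  linarith

/-- `infDist` of a negation. -/
lemma infDist_neg_le {X : Type*} [NormedAddCommGroup X]
    {s : Set X} (hneg : ∀ a ∈ s, -a ∈ s) (hs : s.Nonempty) (x : X) :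
    infDist (-x) s ≤ infDist x s := by
  refine le_of_forall_sub_le fun δ hδ => ?_
  obtain ⟨a, ha, hda⟩ := (infDist_lt_iff hs).1 (lt_add_of_pos_right (infDist x s) hδ)
  have h1 : infDist (-x) s ≤ dist (-x) (-a) := infDist_le_dist_of_mem (hneg a ha)
  rw [dist_neg_neg] at h1
  linarith

/-- Lower bound for `infDist` of a positive scalar multiple. -/
lemma mul_infDist_le {X : Type*} [NormedAddCommGroup X] [NormedSpace ℝ X]
    {s : Set X} {t : ℝ} (ht : 0 < t) (hsc : ∀ a ∈ s, t⁻¹ • a ∈ s)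
    (hs : s.Nonempty) (x : X) :
    t * infDist x s ≤ infDist (t • x) s := by
  by_contra h
  push_neg at h
  have h' : infDist (t • x) s < t * infDist x s := h
  obtain ⟨a, ha, hda⟩ := (infDist_lt_iff hs).1 h'
  have key : dist (t • x) a = t * dist x (t⁻¹ • a) := by
    rw [dist_eq_norm, dist_eq_norm, ← norm_smul_of_nonneg ht.le]
    congr 1
    rw [smul_sub, smul_inv_smul₀ ht.ne']
  have hmem := hsc a ha
  have : t * infDist x s ≤ t * dist x (t⁻¹ • a) :=
    mul_le_mul_of_nonneg_left (infDist_le_dist_of_mem hmem) ht.le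
  rw [← key] at this
  linarith

/-- If a closed subspace `Y` of a Banach space `X` (with the norm inherited from `X`) is
`c`-far from an approximation scheme `(A n)` for some `c > 0`, then `Y` satisfies
Shapiro's Theorem relative to `(A n)`. -/
theorem far_implies_shapiro
    {X : Type*} [NormedAddCommGroup X] [NormedSpace ℝ X] [CompleteSpace X]
    (A : ℕ → Set X) (K : ℕ → ℕ) (hA : IsApproximationScheme A K)
    (Y : Submodule ℝ X) (hYc : IsClosed (Y : Set X))
    (c : ℝ) (hc : 0 < c)
    (hfar : ∀ n : ℕ, ∀ δ > (0 : ℝ), ∃ y ∈ Y, ‖y‖ = 1 ∧ infDist y (A n) > c - δ) :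
    ∀ ε : ℕ → ℝ, NullSeq ε →
      ∃ y ∈ Y, ¬ ∃ C : ℝ, ∀ n : ℕ, infDist y (A n) ≤ C * ε n := by
  intro ε hε
  obtain ⟨hε0, hεanti, hεlim⟩ := hε
  obtain ⟨hchain, hK, hsmul, -⟩ := hA
  -- monotonicity and nonemptiness of `A n` for `n ≥ 1`
  have hmono : Monotone A := monotone_nat_of_le_succ fun n => (hchain n).subset
  have hne : ∀ n : ℕ, 1 ≤ n → (A n).Nonempty := by
    intro n hn
    obtain ⟨x, hx1, -⟩ := Set.exists_of_ssubset (hchain 0)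
    exact ⟨x, hmono hn hx1⟩
  by_contra hcon
  push_neg at hcon
  -- Baire category on the closed subspace Y
  haveI : CompleteSpace Y := hYc.completeSpace_coe
  haveI : BaireSpace Y := BaireSpace.of_completelyPseudoMetrizable
  set F : ℕ → Set Y := fun m => {y : Y | ∀ n, infDist (y : X) (A n) ≤ (m : ℝ) * ε n} with hF
  have hFclosed : ∀ m, IsClosed (F m) := by
    intro m
    have : F m = ⋂ n, {y : Y | infDist (y : X) (A n) ≤ (m : ℝ) * ε n} := by
      ext y; simp [hF, Set.mem_iInter]
    rw [this]
    exact isClosed_iInter fun n =>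
      isClosed_le ((continuous_infDist_pt (A n)).comp continuous_subtype_val) continuous_const
  have hFcover : (⋃ m, F m) = Set.univ := by
    apply Set.eq_univ_of_forall
    intro y
    obtain ⟨C, hC⟩ := hcon (y : X) y.2
    refine Set.mem_iUnion.2 ⟨⌈C⌉₊, fun n => ?_⟩
    exact (hC n).trans (mul_le_mul_of_nonneg_right (Nat.le_ceil C) (hε0 n))
  obtain ⟨m, hm⟩ := nonempty_interior_of_iUnion_of_closed hFclosed hFcover
  obtain ⟨y₀, hy₀⟩ := hm
  obtain ⟨r, hr, hball⟩ := Metric.mem_nhds_iff.1 (mem_interior_iff_mem_nhds.1 hy₀)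
  have hy₀F : y₀ ∈ F m := hball (mem_ball_self hr)
  -- For each n ≥ 1, derive the key bound
  have key : ∀ n : ℕ, 1 ≤ n → r / 2 * (c / 2) ≤ 2 * (m : ℝ) * ε n := by
    intro n hn
    have hKn1 : 1 ≤ K n := hn.trans (hK n).1
    have hAn : (A n).Nonempty := hne n hn
    have hAKn : (A (K n)).Nonempty := hne (K n) hKn1
    obtain ⟨z, hzY, hz1, hzfar⟩ := hfar (K n) (c / 2) (half_pos hc)
    rw [sub_half] at hzfar
    -- w := y₀ + (r/2) • z ∈ ball y₀ r
    set w : Y := y₀ + (r / 2) • ⟨z, hzY⟩ with hw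
    have hwball : w ∈ Metric.ball y₀ r := by
      have : dist w y₀ = r / 2 := by
        rw [dist_eq_norm, hw, add_sub_cancel_left, norm_smul]
        have : ‖(⟨z, hzY⟩ : Y)‖ = 1 := hz1
        rw [this, mul_one, Real.norm_eq_abs, abs_of_pos (half_pos hr)]
      rw [Metric.mem_ball, this]
      exact half_lt_self hr
    have hwF : w ∈ F m := hball hwball
    -- (r/2) • z = w - y₀ as elements of X
    have hdecomp : (r / 2) • z = (w : X) + (-(y₀ : X)) := by
      simp [hw]
    have hsum : infDist ((r / 2) • z) (A (K n)) ≤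
        infDist (w : X) (A n) + infDist (-(y₀ : X)) (A n) := by
      rw [hdecomp]
      exact infDist_add_le (hK n).2 hAn _ _
    have hnegle : infDist (-(y₀ : X)) (A n) ≤ infDist (y₀ : X) (A n) := by
      refine infDist_neg_le (fun a ha => ?_) hAn _
      have := hsmul n (-1)
      exact this ⟨a, ha, by simp⟩
    have hscale : (r / 2) * infDist z (A (K n)) ≤ infDist ((r / 2) • z) (A (K n)) := by
      refine mul_infDist_le (half_pos hr) (fun a ha => ?_) hAKn _
      exact hsmul (K n) (r / 2)⁻¹ ⟨a, ha, rfl⟩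
    have h1 : infDist (w : X) (A n) ≤ (m : ℝ) * ε n := hwF n
    have h2 : infDist (y₀ : X) (A n) ≤ (m : ℝ) * ε n := hy₀F n
    have h3 : r / 2 * (c / 2) ≤ r / 2 * infDist z (A (K n)) :=
      mul_le_mul_of_nonneg_left hzfar.le (half_pos hr).le
    linarith
  -- contradiction with ε → 0
  have hpos : 0 < r / 2 * (c / 2) / (2 * (m : ℝ) + 1) := by positivity
  have : ∀ᶠ n in atTop, ε n < r / 2 * (c / 2) / (2 * (m : ℝ) + 1) :=
    hεlim.eventually (gt_mem_nhds hpos)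
  obtain ⟨n, hn1, hnlt⟩ := ((eventually_ge_atTop 1).and this).exists
  have hkey := key n hn1
  have hmn : (0 : ℝ) ≤ (m : ℝ) := Nat.cast_nonneg m
  have hεn : 0 ≤ ε n := hε0 n
  have h4 : ε n * (2 * (m : ℝ) + 1) < r / 2 * (c / 2) :=
    (lt_div_iff₀ (by positivity)).1 hnlt
  nlinarith [hkey, h4, hmn, hεn]
end

section
/- Let X be a real Banach space, let (A_i) be an approximation scheme in X, and let Y and Z be linear subspaces of X equipped with the norm inherited from X. Suppose Y is c-far from (A_i) for some c > 0 (that is, E(S(Y), A_i) ≥ c for every i), and that E(S(Y), Z) < c. Then Z is c₁-far from (A_i), where c₁ = (c − E(S(Y),Z)) / (1 + c). -/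
open Metric Filter Pointwise

/-- `E(S(Y), Z)`: the supremum of the best approximation errors `E(y, Z)` over the
unit sphere of `Y`. -/
noncomputable def sphereSupDist {X : Type*} [NormedAddCommGroup X] (Y Z : Set X) : ℝ :=
  sSup ((fun y => Metric.infDist y Z) '' {y ∈ Y | ‖y‖ = 1})

/-- If `Y` is `c`-far from an approximation scheme `(A n)` and `E(S(Y), Z) < c`, then `Z`
is `c₁`-far from `(A n)` with `c₁ = (c - E(S(Y), Z)) / (1 + c)`. -/
theorem far_perturbation
    {X : Type*} [NormedAddCommGroup X] [NormedSpace ℝ X] [CompleteSpace X]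
    (A : ℕ → Set X) (K : ℕ → ℕ) (hA : IsApproximationScheme A K)
    (Y Z : Submodule ℝ X) (c : ℝ) (hc : 0 < c)
    (hYfar : ∀ n : ℕ, ∀ δ > (0 : ℝ), ∃ y ∈ Y, ‖y‖ = 1 ∧ infDist y (A n) > c - δ)
    (hYZ : sphereSupDist (Y : Set X) (Z : Set X) < c) :
    ∀ n : ℕ, ∀ δ > (0 : ℝ), ∃ z ∈ Z, ‖z‖ = 1 ∧
      infDist z (A n) > (c - sphereSupDist (Y : Set X) (Z : Set X)) / (1 + c) - δ := by
  classical
  set b := sphereSupDist (Y : Set X) (Z : Set X) with hbdef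
  intro n δ hδ
  -- A n is nonempty
  have hAne : (A n).Nonempty := by
    by_contra h
    rw [Set.not_nonempty_iff_eq_empty] at h
    obtain ⟨y, _, _, hy⟩ := hYfar n c hc
    rw [h, Metric.infDist_empty] at hy
    linarith
  -- 0 ∈ A n
  have h0A : (0 : X) ∈ A n := by
    obtain ⟨a, ha⟩ := hAne
    have h := hA.2.2.1 n 0 (Set.smul_mem_smul_set ha : (0:ℝ) • a ∈ (0:ℝ) • A n)
    simpa using h
  -- c ≤ 1
  have hc1 : c ≤ 1 := by
    by_contra h
    push_neg at h
    obtain ⟨y, _, hy1, hyd⟩ := hYfar n ((c - 1) / 2) (by linarith)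
    have h1 : infDist y (A n) ≤ 1 := by
      have := Metric.infDist_le_dist_of_mem (x := y) h0A
      simpa [hy1] using this
    linarith
  have hZne : (Z : Set X).Nonempty := ⟨0, Z.zero_mem⟩
  -- b is an upper bound for sphere distances
  have hbdd : BddAbove ((fun y => Metric.infDist y (Z : Set X)) ''
      {y ∈ (Y : Set X) | ‖y‖ = 1}) := by
    refine ⟨1, ?_⟩
    rintro r ⟨y, ⟨_, hy1⟩, rfl⟩
    have := Metric.infDist_le_dist_of_mem (x := y) Z.zero_mem
    simpa [hy1] using this
  have hle_b : ∀ y ∈ (Y : Set X), ‖y‖ = 1 → infDist y (Z : Set X) ≤ b := fun y hy h1 =>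
    le_csSup hbdd ⟨y, ⟨hy, h1⟩, rfl⟩
  have hb0 : 0 ≤ b := by
    obtain ⟨y, hyY, hy1, _⟩ := hYfar n 1 one_pos
    exact le_trans Metric.infDist_nonneg (hle_b y hyY hy1)
  -- choose the tolerance t
  set t : ℝ := min ((c - b) / 4) (δ / 2) with htdef
  have ht0 : 0 < t := lt_min (by linarith) (by linarith)
  have htle : t ≤ (c - b) / 4 := min_le_left _ _
  have htδ : t ≤ δ / 2 := min_le_right _ _
  -- pick y on the sphere of Y far from A n
  obtain ⟨y, hyY, hy1, hyd⟩ := hYfar n t ht0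
  have hyz : infDist y (Z : Set X) < b + t := lt_of_le_of_lt (hle_b y hyY hy1) (by linarith)
  obtain ⟨z', hz'Z, hz'd⟩ := (Metric.infDist_lt_iff hZne).1 hyz
  rw [dist_eq_norm] at hz'd
  have hnyz' := norm_sub_norm_le y z'
  have hnz'y := norm_sub_norm_le z' y
  rw [norm_sub_rev z' y] at hnz'y
  have hz'pos : 0 < ‖z'‖ := by
    have : b + t < 1 := by linarith
    linarith [hy1 ▸ hnyz']
  have hz'ub : ‖z'‖ < 1 + (b + t) := by
    have := hy1 ▸ hnz'y
    linarith
  set z : X := ‖z'‖⁻¹ • z' with hzdef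
  have hzz' : ‖z'‖ • z = z' := by
    rw [hzdef, smul_smul, mul_inv_cancel₀ (ne_of_gt hz'pos), one_smul]
  refine ⟨z, Z.smul_mem _ hz'Z, ?_, ?_⟩
  · rw [hzdef, norm_smul]
    simp [abs_of_pos (inv_pos.2 hz'pos), inv_mul_cancel₀ (ne_of_gt hz'pos)]
  · have key : ∀ a ∈ A n, (c - b - 2 * t) / (1 + b + t) ≤ dist z a := by
      intro a haA
      have ha' : ‖z'‖ • a ∈ A n := hA.2.2.1 n ‖z'‖ (Set.smul_mem_smul_set haA)
      have h1 : c - t < dist y (‖z'‖ • a) :=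
        lt_of_lt_of_le hyd (Metric.infDist_le_dist_of_mem ha')
      have h2 : dist z' (‖z'‖ • a) = ‖z'‖ * dist z a := by
        rw [dist_eq_norm, dist_eq_norm, show z' - ‖z'‖ • a = ‖z'‖ • (z - a) by
          rw [smul_sub, hzz'], norm_smul, norm_norm]
      have h3 : c - b - 2 * t < dist z' (‖z'‖ • a) := by
        have := dist_triangle y z' (‖z'‖ • a)
        rw [dist_eq_norm y z'] at this
        linarith
      have hdnn : 0 ≤ dist z a := dist_nonneg
      have h4 : c - b - 2 * t < (1 + b + t) * dist z a := by
        rw [h2] at h3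
        nlinarith
      rw [div_le_iff₀ (by linarith)]
      linarith
    have hinf : (c - b - 2 * t) / (1 + b + t) ≤ infDist z (A n) := by
      by_contra h
      push_neg at h
      obtain ⟨a, haA, had⟩ := (Metric.infDist_lt_iff hAne).1 h
      exact absurd had (not_lt.2 (key a haA))
    have hnum : 0 < c - b - 2 * t := by linarith
    have h5 : (c - b - 2 * t) / (1 + c) ≤ (c - b - 2 * t) / (1 + b + t) :=
      div_le_div_of_nonneg_left (le_of_lt hnum) (by linarith) (by linarith)
    have h7 : 2 * t / (1 + c) < δ := by
      rw [div_lt_iff₀ (by linarith)]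
      nlinarith
    have h6 : (c - b) / (1 + c) - (c - b - 2 * t) / (1 + c) = 2 * t / (1 + c) := by
      ring
    linarith
end

section
/- Let X be a real Banach space, let (A_i) be an approximation scheme in X, and let Y be a closed linear subspace of X satisfying Shapiro's Theorem relative to (A_i). Then there exists δ > 0 such that every closed linear subspace Z of X with E(S(Y), Z) < δ also satisfies Shapiro's Theorem relative to (A_i). -/
open Metric Filter Pointwise

private lemma my_le_infDist {X : Type*} [NormedAddCommGroup X] {s : Set X} (hs : s.Nonempty)
    {x : X} {r : ℝ} (h : ∀ y ∈ s, r ≤ dist x y) : r ≤ infDist x s := by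
  rw [Metric.infDist_eq_iInf]
  haveI := hs.to_subtype
  exact le_ciInf fun y => h y y.2

private lemma my_infDist_smul_le {X : Type*} [NormedAddCommGroup X] [NormedSpace ℝ X]
    {s : Set X} (h : ∀ c : ℝ, c • s ⊆ s) (c : ℝ) (x : X) :
    infDist (c • x) s ≤ |c| * infDist x s := by
  rcases s.eq_empty_or_nonempty with rfl | hs
  · simp
  rcases eq_or_ne c 0 with rfl | hc
  · obtain ⟨a, ha⟩ := hs
    have h0 : (0 : X) ∈ s := by
      have : (0:ℝ) • a ∈ (0:ℝ) • s := Set.smul_mem_smul_set ha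
      rw [zero_smul] at this
      exact h 0 this
    simp [Metric.infDist_zero_of_mem h0]
  · have hc' : 0 < |c| := abs_pos.2 hc
    have hle : infDist (c • x) s / |c| ≤ infDist x s := by
      apply my_le_infDist hs
      intro y hy
      rw [div_le_iff₀ hc']
      calc infDist (c • x) s ≤ dist (c • x) (c • y) :=
            Metric.infDist_le_dist_of_mem (h c (Set.smul_mem_smul_set hy))
        _ = |c| * dist x y := by rw [dist_smul₀, Real.norm_eq_abs]
        _ = dist x y * |c| := mul_comm _ _
    calc infDist (c • x) s = |c| * (infDist (c • x) s / |c|) := by field_simp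
      _ ≤ |c| * infDist x s := mul_le_mul_of_nonneg_left hle (le_of_lt hc')

private lemma my_infDist_add_le {X : Type*} [NormedAddCommGroup X] {s t : Set X}
    (hs : s.Nonempty) (hst : s + s ⊆ t) (a b : X) :
    infDist (a + b) t ≤ infDist a s + infDist b s := by
  have key : ∀ u ∈ s, ∀ v ∈ s, infDist (a + b) t ≤ dist a u + dist b v := by
    intro u hu v hv
    calc infDist (a + b) t ≤ dist (a + b) (u + v) :=
          Metric.infDist_le_dist_of_mem (hst (Set.add_mem_add hu hv))
      _ ≤ dist a u + dist b v := dist_add_add_le a b u v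
  have h1 : ∀ u ∈ s, infDist (a + b) t - dist a u ≤ infDist b s := by
    intro u hu
    apply my_le_infDist hs
    intro v hv
    linarith [key u hu v hv]
  have h2 : infDist (a + b) t - infDist b s ≤ infDist a s := by
    apply my_le_infDist hs
    intro u hu
    linarith [h1 u hu]
  linarith

set_option synthInstance.maxHeartbeats 1000000 in
/-- If a closed subspace `Y` of a Banach space `X` satisfies Shapiro's Theorem relative
to an approximation scheme `(A n)`, then there is `δ > 0` such that every closed
subspace `Z` with `E(S(Y), Z) < δ` also satisfies Shapiro's Theorem relative to `(A n)`. -/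
theorem shapiro_perturbation
    {X : Type*} [NormedAddCommGroup X] [NormedSpace ℝ X] [CompleteSpace X]
    (A : ℕ → Set X) (K : ℕ → ℕ) (hA : IsApproximationScheme A K)
    (Y : Submodule ℝ X) (hYc : IsClosed (Y : Set X))
    (hShapY : ∀ ε : ℕ → ℝ, NullSeq ε →
      ∃ y ∈ Y, ¬ ∃ C : ℝ, ∀ n : ℕ, infDist y (A n) ≤ C * ε n) :
    ∃ δ > (0 : ℝ), ∀ Z : Submodule ℝ X, IsClosed (Z : Set X) →
      sphereSupDist (Y : Set X) (Z : Set X) < δ →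
      ∀ ε : ℕ → ℝ, NullSeq ε →
        ∃ z ∈ Z, ¬ ∃ C : ℝ, ∀ n : ℕ, infDist z (A n) ≤ C * ε n := by
  obtain ⟨hchain, hKadd, hsmul, -⟩ := hA
  have hmono : Monotone A := monotone_nat_of_le_succ fun n => (hchain n).subset
  -- A n is nonempty for n ≥ 1
  have hne : ∀ n, 1 ≤ n → (A n).Nonempty := by
    intro n hn
    obtain ⟨x, hx1, -⟩ := Set.exists_of_ssubset (hchain 0)
    exact ⟨x, hmono hn hx1⟩
  have hzero : ∀ n, 1 ≤ n → (0 : X) ∈ A n := by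
    intro n hn
    obtain ⟨a, ha⟩ := hne n hn
    have : (0:ℝ) • a ∈ (0:ℝ) • A n := Set.smul_mem_smul_set ha
    rw [zero_smul] at this
    exact hsmul n 0 this
  set S : Set X := {y ∈ (Y : Set X) | ‖y‖ = 1} with hS
  set d : ℕ → ℝ := fun n => sSup ((fun y => infDist y (A n)) '' S) with hd
  have hbdd : ∀ n, BddAbove ((fun y => infDist y (A n)) '' S) := by
    intro n
    rcases (A n).eq_empty_or_nonempty with he | ⟨a, ha⟩
    · refine ⟨0, ?_⟩
      rintro x ⟨y, -, rfl⟩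
      simp [he]
    · refine ⟨1 + ‖a‖, ?_⟩
      rintro x ⟨y, ⟨-, hy1⟩, rfl⟩
      calc infDist y (A n) ≤ dist y a := Metric.infDist_le_dist_of_mem ha
        _ ≤ ‖y‖ + ‖a‖ := by rw [dist_eq_norm]; exact norm_sub_le y a
        _ = 1 + ‖a‖ := by rw [hy1]
  have hd0 : ∀ n, 0 ≤ d n := by
    intro n
    apply Real.sSup_nonneg
    rintro x ⟨y, -, rfl⟩
    exact Metric.infDist_nonneg
  have hdle : ∀ n, ∀ y ∈ S, infDist y (A n) ≤ d n := by
    intro n y hy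
    exact le_csSup (hbdd n) ⟨y, hy, rfl⟩
  have hstep : ∀ n, 1 ≤ n → d (n + 1) ≤ d n := by
    intro n hn
    apply Real.sSup_le _ (hd0 n)
    rintro x ⟨y, hy, rfl⟩
    calc infDist y (A (n+1)) ≤ infDist y (A n) :=
          Metric.infDist_le_infDist_of_subset (hmono (Nat.le_succ n)) (hne n hn)
      _ ≤ d n := hdle n y hy
  have hdanti : ∀ m n, 1 ≤ m → m ≤ n → d n ≤ d m := by
    intro m n h1 hmn
    induction n, hmn using Nat.le_induction with
    | base => exact le_rfl
    | succ k hk ih => exact le_trans (hstep k (h1.trans hk)) ih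
  -- scaling bound : for y ∈ Y, infDist y (A n) ≤ ‖y‖ * d n
  have hsc : ∀ y ∈ Y, ∀ n, infDist y (A n) ≤ ‖y‖ * d n := by
    intro y hy n
    rcases eq_or_ne y 0 with rfl | hy0
    · rcases (A n).eq_empty_or_nonempty with he | ⟨a, ha⟩
      · simp [he]
      · have h0 : (0 : X) ∈ A n := by
          have : (0:ℝ) • a ∈ (0:ℝ) • A n := Set.smul_mem_smul_set ha
          rw [zero_smul] at this
          exact hsmul n 0 this
        simp [Metric.infDist_zero_of_mem h0]
    · set u : X := ‖y‖⁻¹ • y with hu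
      have hy' : (0:ℝ) < ‖y‖ := norm_pos_iff.2 hy0
      have huS : u ∈ S := by
        refine ⟨Y.smul_mem _ hy, ?_⟩
        rw [hu, norm_smul, norm_inv, norm_norm, inv_mul_cancel₀ (ne_of_gt hy')]
      have hyu : y = ‖y‖ • u := by
        rw [hu, smul_smul, mul_inv_cancel₀ (ne_of_gt hy'), one_smul]
      calc infDist y (A n) = infDist (‖y‖ • u) (A n) := by rw [← hyu]
        _ ≤ |‖y‖| * infDist u (A n) := my_infDist_smul_le (hsmul n) _ _
        _ = ‖y‖ * infDist u (A n) := by rw [abs_of_pos hy']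
        _ ≤ ‖y‖ * d n := mul_le_mul_of_nonneg_left (hdle n u huS) (le_of_lt hy')
  -- there is c > 0 with c ≤ d n for all n ≥ 1
  have hc : ∃ c > (0:ℝ), ∀ n, 1 ≤ n → c ≤ d n := by
    by_contra hcon
    push_neg at hcon
    -- d tends to 0 along n ≥ 1; build a NullSeq contradicting hShapY
    set ε : ℕ → ℝ := fun n => max (d n) (d (n+1)) + 1/(n+1) with hε
    have hεnn : ∀ n, 0 ≤ ε n := by
      intro n
      have : (0:ℝ) < 1/(n+1) := by positivity
      have := hd0 n
      simp only [hε]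
      nlinarith [le_max_left (d n) (d (n+1))]
    have hεanti : Antitone ε := by
      apply antitone_nat_of_succ_le
      intro n
      have h1 : d (n+2) ≤ d (n+1) := hstep (n+1) (by omega)
      have h2 : max (d (n+1)) (d (n+2)) ≤ max (d n) (d (n+1)) :=
        max_le (le_max_right _ _) (h1.trans (le_max_right _ _))
      have h3 : (1:ℝ)/(n+1+1) ≤ 1/(n+1) := by
        apply one_div_le_one_div_of_le <;> push_cast <;> linarith
      simp only [hε]
      push_cast
      linarith
    have hεt : Tendsto ε atTop (nhds 0) := by
      rw [Metric.tendsto_atTop]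
      intro η hη
      obtain ⟨n₀, hn₀1, hdn₀⟩ := hcon (η/2) (by linarith)
      have t1 : Tendsto (fun n : ℕ => 1/((n:ℝ)+1)) atTop (nhds 0) :=
        tendsto_one_div_add_atTop_nhds_zero_nat
      obtain ⟨N₁, hN₁⟩ := (Metric.tendsto_atTop.1 t1) (η/2) (by linarith)
      refine ⟨max n₀ N₁, fun n hn => ?_⟩
      have hn1 : n₀ ≤ n := le_trans (le_max_left _ _) hn
      have hd1 : d n ≤ d n₀ := hdanti n₀ n hn₀1 hn1
      have hd2 : d (n+1) ≤ d n₀ := hdanti n₀ (n+1) hn₀1 (by omega)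
      have h4 := hN₁ n (le_trans (le_max_right _ _) hn)
      rw [Real.dist_eq, sub_zero] at h4 ⊢
      rw [abs_of_nonneg (hεnn n)]
      have h5 : (1:ℝ)/(n+1) < η/2 := lt_of_abs_lt h4
      have h6 : max (d n) (d (n+1)) ≤ d n₀ := max_le hd1 hd2
      simp only [hε]
      linarith
    obtain ⟨y, hyY, hy⟩ := hShapY ε ⟨hεnn, hεanti, hεt⟩
    apply hy
    refine ⟨‖y‖, fun n => ?_⟩
    calc infDist y (A n) ≤ ‖y‖ * d n := hsc y hyY n
      _ ≤ ‖y‖ * ε n := by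
          apply mul_le_mul_of_nonneg_left _ (norm_nonneg y)
          have : (0:ℝ) < 1/(n+1) := by positivity
          simp only [hε]
          nlinarith [le_max_left (d n) (d (n+1))]
  obtain ⟨c, hcpos, hcd⟩ := hc
  refine ⟨min c 1 / 4, by positivity, ?_⟩
  intro Z hZc hZdist ε hε
  by_contra hcon
  push_neg at hcon
  -- hcon : ∀ z ∈ Z, ∃ C, ∀ n, infDist z (A n) ≤ C * ε n  (after de-negation)
  obtain ⟨hεnn, hεanti, hεt⟩ := hε
  haveI : CompleteSpace Z := hZc.completeSpace_coe
  haveI : Nonempty Z := ⟨0⟩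
  set g : ℕ → Set Z := fun C => {z : Z | ∀ n, infDist (z : X) (A n) ≤ (C:ℝ) * ε n} with hg
  have hgc : ∀ C, IsClosed (g C) := by
    intro C
    have : g C = ⋂ n, {z : Z | infDist (z : X) (A n) ≤ (C:ℝ) * ε n} := by
      ext z; simp [hg, Set.mem_iInter]
    rw [this]
    exact isClosed_iInter fun n =>
      isClosed_le ((Metric.continuous_infDist_pt (A n)).comp continuous_subtype_val)
        continuous_const
  have hgu : ⋃ C, g C = Set.univ := by
    apply Set.eq_univ_of_forall
    intro z
    obtain ⟨C, hC⟩ := hcon (z : X) z.2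
    refine Set.mem_iUnion.2 ⟨⌈C⌉₊, fun n => ?_⟩
    exact le_trans (hC n) (mul_le_mul_of_nonneg_right (Nat.le_ceil C) (hεnn n))
  obtain ⟨C₀, hC₀⟩ := nonempty_interior_of_iUnion_of_closed hgc hgu
  obtain ⟨z₀, hz₀⟩ := hC₀
  rw [mem_interior_iff_mem_nhds, Metric.mem_nhds_iff] at hz₀
  obtain ⟨r, hr, hball⟩ := hz₀
  have hz₀b : ∀ n, infDist ((z₀ : X)) (A n) ≤ (C₀:ℝ) * ε n :=
    hball (Metric.mem_ball_self hr)
  -- uniform bound for small elements of Z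
  have hub : ∀ n, 1 ≤ n → ∀ w ∈ Z, ‖w‖ < r →
      infDist w (A (K n)) ≤ 2 * (C₀:ℝ) * ε n := by
    intro n hn w hw hwr
    have hmem : z₀ + (⟨w, hw⟩ : Z) ∈ Metric.ball z₀ r := by
      rw [Metric.mem_ball, Subtype.dist_eq]
      simp only [Submodule.coe_add]
      rw [dist_eq_norm, add_sub_cancel_left]
      exact hwr
    have h1 : ∀ m, infDist ((z₀ : X) + w) (A m) ≤ (C₀:ℝ) * ε m := by
      intro m
      have := hball hmem m
      simpa using this
    have h2 : infDist (-(z₀ : X)) (A n) ≤ infDist (z₀ : X) (A n) := by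
      have := my_infDist_smul_le (hsmul n) (-1) (z₀ : X)
      simpa using this
    have h3 : infDist (((z₀ : X) + w) + (-(z₀ : X))) (A (K n)) ≤
        infDist ((z₀ : X) + w) (A n) + infDist (-(z₀ : X)) (A n) :=
      my_infDist_add_le (hne n hn) (hKadd n).2 _ _
    have h4 : ((z₀ : X) + w) + (-(z₀ : X)) = w := by abel
    rw [h4] at h3
    calc infDist w (A (K n)) ≤ infDist ((z₀ : X) + w) (A n) + infDist (-(z₀ : X)) (A n) := h3
      _ ≤ (C₀:ℝ) * ε n + (C₀:ℝ) * ε n := add_le_add (h1 n) (h2.trans (hz₀b n))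
      _ = 2 * (C₀:ℝ) * ε n := by ring
  -- uniform bound for all nonzero elements of Z
  have hub2 : ∀ n, 1 ≤ n → ∀ z ∈ Z, z ≠ 0 →
      infDist z (A (K n)) ≤ (4 * (C₀:ℝ) / r) * ‖z‖ * ε n := by
    intro n hn z hz hz0
    have hznorm : (0:ℝ) < ‖z‖ := norm_pos_iff.2 hz0
    set w : X := (r / (2 * ‖z‖)) • z with hw
    have hwZ : w ∈ Z := Z.smul_mem _ hz
    have hwnorm : ‖w‖ = r / 2 := by
      rw [hw, norm_smul, Real.norm_eq_abs, abs_of_pos (by positivity)]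
      field_simp
    have hwr : ‖w‖ < r := by rw [hwnorm]; linarith
    have hzw : z = (2 * ‖z‖ / r) • w := by
      rw [hw, smul_smul]
      rw [show (2 * ‖z‖ / r) * (r / (2 * ‖z‖)) = 1 by field_simp]
      rw [one_smul]
    calc infDist z (A (K n)) = infDist ((2 * ‖z‖ / r) • w) (A (K n)) := by rw [← hzw]
      _ ≤ |2 * ‖z‖ / r| * infDist w (A (K n)) := my_infDist_smul_le (hsmul (K n)) _ _
      _ = (2 * ‖z‖ / r) * infDist w (A (K n)) := by rw [abs_of_pos (by positivity)]
      _ ≤ (2 * ‖z‖ / r) * (2 * (C₀:ℝ) * ε n) := by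
          exact mul_le_mul_of_nonneg_left (hub n hn w hwZ hwr) (by positivity)
      _ = (4 * (C₀:ℝ) / r) * ‖z‖ * ε n := by
          rw [show (4 * (C₀:ℝ) / r) * ‖z‖ * ε n = (2 * ‖z‖ / r) * (2 * (C₀:ℝ) * ε n) from by ring]
  -- now derive the contradiction with the lower bound c ≤ d m
  have hkey : ∀ n, 1 ≤ n → min c 1 / 4 < (4 * (C₀:ℝ) / r) * 2 * ε n := by
    intro n hn
    set m := K n with hm
    have hm1 : 1 ≤ m := le_trans hn (hKadd n).1
    have hcm : c ≤ d m := hcd m hm1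
    -- pick y ∈ S with infDist y (A m) > c/2
    have hy : ∃ y ∈ S, c/2 < infDist y (A m) := by
      by_contra hny
      push_neg at hny
      have : d m ≤ c/2 := Real.sSup_le (by rintro x ⟨y, hyS, rfl⟩; exact hny y hyS) (by linarith)
      linarith
    obtain ⟨y, hyS, hym⟩ := hy
    obtain ⟨hyY, hy1⟩ := hyS
    -- infDist y Z < δ
    have hbddZ : BddAbove ((fun y => infDist y (Z : Set X)) '' S) := by
      refine ⟨1, ?_⟩
      rintro x ⟨u, ⟨-, hu1⟩, rfl⟩
      calc infDist u (Z : Set X) ≤ dist u 0 := Metric.infDist_le_dist_of_mem Z.zero_mem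
        _ = ‖u‖ := by rw [dist_zero_right]
        _ = 1 := hu1
    have hyZ : infDist y (Z : Set X) < min c 1 / 4 :=
      lt_of_le_of_lt (le_csSup hbddZ ⟨y, ⟨hyY, hy1⟩, rfl⟩) hZdist
    obtain ⟨z, hzZ, hdyz⟩ := (Metric.infDist_lt_iff ⟨0, Z.zero_mem⟩).1 hyZ
    have hδc : min c 1 / 4 ≤ c / 4 := by
      have := min_le_left c 1; linarith
    have hδ1 : min c 1 / 4 ≤ 1 := by
      have := min_le_right c 1; linarith
    have hz4 : c/4 < infDist z (A m) := by
      have := Metric.infDist_le_infDist_add_dist (x := y) (y := z) (s := A m)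
      linarith
    have hz0 : z ≠ 0 := by
      intro h
      rw [h, Metric.infDist_zero_of_mem (hzero m hm1)] at hz4
      linarith
    have hznorm : ‖z‖ ≤ 2 := by
      have h1 : ‖z‖ ≤ ‖y‖ + ‖z - y‖ := by
        have := norm_add_le y (z - y)
        rwa [show y + (z - y) = z from by abel] at this
      have h2 : ‖z - y‖ = dist y z := by rw [dist_eq_norm, norm_sub_rev]
      rw [hy1] at h1
      linarith
    have hb := hub2 n hn z hzZ hz0
    have h4r : (0:ℝ) ≤ 4 * (C₀:ℝ) / r := by positivity
    calc min c 1 / 4 ≤ c / 4 := hδc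
      _ < infDist z (A m) := hz4
      _ ≤ (4 * (C₀:ℝ) / r) * ‖z‖ * ε n := hb
      _ ≤ (4 * (C₀:ℝ) / r) * 2 * ε n :=
          mul_le_mul_of_nonneg_right (mul_le_mul_of_nonneg_left hznorm h4r) (hεnn n)
  -- contradiction with ε → 0
  set M : ℝ := (4 * ((C₀:ℝ)+1) / r) * 2 with hM
  have hMpos : 0 < M := by positivity
  have hkey2 : ∀ n, 1 ≤ n → min c 1 / 4 / M < ε n := by
    intro n hn
    have h := hkey n hn
    have hle : (4 * (C₀:ℝ) / r) * 2 * ε n ≤ M * ε n := by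
      have : (4 * (C₀:ℝ) / r) * 2 ≤ M := by
        rw [hM]
        have : (C₀:ℝ) ≤ (C₀:ℝ) + 1 := by linarith
        have hr' : 0 < r := hr
        gcongr
      exact mul_le_mul_of_nonneg_right this (hεnn n)
    rw [div_lt_iff₀ hMpos, mul_comm]
    exact lt_of_lt_of_le h hle
  have hηpos : 0 < min c 1 / 4 / M := by positivity
  obtain ⟨N, hN⟩ := (Metric.tendsto_atTop.1 hεt) (min c 1 / 4 / M) hηpos
  have hNb := hN (max N 1) (le_max_left _ _)
  rw [Real.dist_eq, sub_zero, abs_of_nonneg (hεnn _)] at hNb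
  exact absurd hNb (not_lt.2 (le_of_lt (hkey2 (max N 1) (le_max_right _ _))))
end

section
/- Let X be a real Banach space and let (A_i) be an approximation scheme in X. Let (Y_j)_{j ∈ ℕ} be a countable collection of linear subspaces of X, each of which fails Shapiro's Theorem relative to (A_i). Then the linear span of ⋃_j Y_j fails Shapiro's Theorem relative to (A_i): there exist a nonincreasing sequence of nonnegative reals ε_n → 0 and a function C : span[⋃_j Y_j] → [0,∞) such that E(y, A_n) ≤ C(y) ε_n for all n and all y in the span. -/
open Metric Filter Pointwise

/-- The subspace `Y` of `X` fails Shapiro's Theorem relative to `(A n)`: there are a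
nonincreasing null sequence `ε` and a nonnegative function `C` on `Y` such that
`E(y, A n) ≤ C y * ε n` for all `n` and all `y ∈ Y`. -/
def FailsShapiroFor {X : Type*} [NormedAddCommGroup X] (Y : Set X) (A : ℕ → Set X) : Prop :=
  ∃ ε : ℕ → ℝ, NullSeq ε ∧ ∃ C : X → ℝ, (∀ y ∈ Y, 0 ≤ C y) ∧
    ∀ y ∈ Y, ∀ n : ℕ, Metric.infDist y (A n) ≤ C y * ε n

lemma combine_null (δ : ℕ → ℕ → ℝ) (h : ∀ j, NullSeq (δ j)) :
    ∃ ε : ℕ → ℝ, NullSeq ε ∧ (∀ n, 0 < ε n) ∧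
      ∀ j, ∃ c : ℝ, 0 ≤ c ∧ ∀ n, δ j n ≤ c * ε n := by
  set f : ℕ → ℕ → ℝ := fun n j => (1/2 : ℝ)^j * (δ j n / (1 + δ j 0)) with hf
  have hδ0 : ∀ j n, 0 ≤ δ j n := fun j n => (h j).1 n
  have hpos : ∀ j, (0:ℝ) < 1 + δ j 0 := fun j => by linarith [hδ0 j 0]
  have hfnn : ∀ n j, 0 ≤ f n j := fun n j =>
    mul_nonneg (by positivity) (div_nonneg (hδ0 j n) (hpos j).le)
  have hfle : ∀ n j, f n j ≤ (1/2:ℝ)^j := by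
    intro n j
    have h1 : δ j n / (1 + δ j 0) ≤ 1 := by
      rw [div_le_one (hpos j)]
      have := (h j).2.1 (Nat.zero_le n); linarith
    calc f n j ≤ (1/2:ℝ)^j * 1 := mul_le_mul_of_nonneg_left h1 (by positivity)
      _ = (1/2:ℝ)^j := mul_one _
  have hgsum : Summable (fun j => (1/2:ℝ)^j) :=
    summable_geometric_of_lt_one (by norm_num) (by norm_num)
  have hfsum : ∀ n, Summable (f n) := fun n =>
    hgsum.of_nonneg_of_le (hfnn n) (hfle n)
  refine ⟨fun n => (1/2:ℝ)^n + ∑' j, f n j, ⟨?_, ?_, ?_⟩, ?_, ?_⟩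
  · intro n
    have : 0 ≤ ∑' j, f n j := tsum_nonneg (hfnn n); positivity
  · intro m n hmn
    apply add_le_add
    · exact pow_le_pow_of_le_one (by norm_num) (by norm_num) hmn
    · refine Summable.tsum_le_tsum (fun j => ?_) (hfsum n) (hfsum m)
      have hd : δ j n ≤ δ j m := (h j).2.1 hmn
      simp only [hf]
      gcongr
      exact (hpos j).le
  · have h1 : Tendsto (fun n => (1/2:ℝ)^n) atTop (nhds 0) :=
      tendsto_pow_atTop_nhds_zero_of_lt_one (by norm_num) (by norm_num)
    have h2 : Tendsto (fun n => ∑' j, f n j) atTop (nhds 0) := by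
      have := tendsto_tsum_of_dominated_convergence (f := f) (g := fun _ => (0:ℝ))
        (𝓕 := atTop) (bound := fun j => (1/2:ℝ)^j) hgsum ?_ ?_
      · simpa using this
      · intro j
        have : Tendsto (fun n => δ j n / (1 + δ j 0)) atTop (nhds (0 / (1 + δ j 0))) :=
          (h j).2.2.div_const _
        simp only [hf]
        simpa using this.const_mul ((1/2:ℝ)^j)
      · filter_upwards with n j
        rw [Real.norm_of_nonneg (hfnn n j)]
        exact hfle n j
    simpa using h1.add h2
  · intro n
    have : 0 ≤ ∑' j, f n j := tsum_nonneg (hfnn n); positivity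
  · intro j
    refine ⟨(1 + δ j 0) * 2^j, mul_nonneg (hpos j).le (by positivity), fun n => ?_⟩
    have h1 : f n j ≤ (1/2:ℝ)^n + ∑' i, f n i := by
      have h2 : f n j ≤ ∑' i, f n i := Summable.le_tsum (hfsum n) j (fun i _ => hfnn n i)
      have : (0:ℝ) ≤ (1/2:ℝ)^n := by positivity
      linarith
    have e2 : (1 + δ j 0) * (δ j n / (1 + δ j 0)) = δ j n := mul_div_cancel₀ _ (hpos j).ne'
    calc δ j n = ((1 + δ j 0) * (δ j n / (1 + δ j 0))) * ((2:ℝ)^j * (1/2)^j) := by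
          rw [e2, show ((2:ℝ)^j * (1/2)^j) = 1 from by rw [← mul_pow]; norm_num, mul_one]
      _ = (1 + δ j 0) * 2^j * f n j := by simp only [hf]; ring
      _ ≤ (1 + δ j 0) * 2^j * ((1/2:ℝ)^n + ∑' i, f n i) :=
          mul_le_mul_of_nonneg_left h1 (mul_nonneg (hpos j).le (by positivity))

/-- If each member of a countable collection `(Y j)` of subspaces of `X` fails Shapiro's
Theorem relative to an approximation scheme `(A n)`, then the linear span of their union
also fails Shapiro's Theorem relative to `(A n)`. -/
theorem span_of_failing_fails
    {X : Type*} [NormedAddCommGroup X] [NormedSpace ℝ X] [CompleteSpace X]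
    (A : ℕ → Set X) (K : ℕ → ℕ) (hA : IsApproximationScheme A K)
    (Y : ℕ → Submodule ℝ X)
    (hfail : ∀ j : ℕ, FailsShapiroFor (Y j : Set X) A) :
    FailsShapiroFor ((⨆ j : ℕ, Y j : Submodule ℝ X) : Set X) A := by
  classical
  obtain ⟨hchain, hKs, hscal, -⟩ := hA
  -- basic facts about the scheme
  have hAmono : Monotone A := monotone_nat_of_le_succ fun n => (hchain n).subset
  have hK : ∀ n, n ≤ K n := fun n => (hKs n).1
  have hadd : ∀ n, A n + A n ⊆ A (K n) := fun n => (hKs n).2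
  have hiter_ge : ∀ k n, n ≤ K^[k] n := by
    intro k
    induction k with
    | zero => simp
    | succ k ih =>
      intro n
      rw [Function.iterate_succ_apply' K k n]
      exact le_trans (ih n) (hK _)
  have hiter_mono : ∀ n, Monotone (fun k => K^[k] n) := by
    intro n
    apply monotone_nat_of_le_succ
    intro k
    rw [Function.iterate_succ_apply' K k n]
    exact hK _
  have hA1 : (A 1).Nonempty := by
    obtain ⟨x, hx, -⟩ := Set.exists_of_ssubset (hchain 0)
    exact ⟨x, hx⟩
  have hAne : ∀ n, 1 ≤ n → (A n).Nonempty := fun n hn =>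
    hA1.mono (hAmono hn)
  have hzeroA : ∀ n, infDist (0 : X) (A n) = 0 := by
    intro n
    rcases (A n).eq_empty_or_nonempty with he | ⟨a, ha⟩
    · rw [he]; exact infDist_empty
    · have h0 : (0 : X) ∈ A n := by
        have := hscal n 0 (Set.mem_smul_set.mpr ⟨a, ha, rfl⟩)
        rwa [zero_smul] at this
      exact infDist_zero_of_mem h0
  -- subadditivity of infDist across the scheme
  have hsub : ∀ (x y : X) (m : ℕ), (A m).Nonempty →
      infDist (x + y) (A (K m)) ≤ infDist x (A m) + infDist y (A m) := by
    intro x y m hne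
    refine le_of_forall_pos_le_add fun δ hδ => ?_
    obtain ⟨a, ha, hda⟩ := (infDist_lt_iff hne).mp
      (lt_add_of_pos_right (infDist x (A m)) (half_pos hδ))
    obtain ⟨b, hb, hdb⟩ := (infDist_lt_iff hne).mp
      (lt_add_of_pos_right (infDist y (A m)) (half_pos hδ))
    have hab : a + b ∈ A (K m) := hadd m (Set.add_mem_add ha hb)
    calc infDist (x + y) (A (K m)) ≤ dist (x + y) (a + b) := infDist_le_dist_of_mem hab
      _ ≤ dist x a + dist y b := dist_add_add_le x y a b
      _ ≤ infDist x (A m) + infDist y (A m) + δ := by linarith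
  -- combine the error sequences of the Y j
  choose εj hεj Cj hCjnn hCj using hfail
  obtain ⟨ε, hε, hεpos, hdom⟩ := combine_null εj hεj
  choose c hc hcd using hdom
  -- inductive step: every element of the span is approximated along a sped-up scheme
  have hP : ∀ (y : X) (hy : y ∈ ⨆ j, Y j), ∃ C : ℝ, 0 ≤ C ∧ ∃ k : ℕ,
      ∀ n, infDist y (A (K^[k] (n + 1))) ≤ C * ε n := by
    intro y hy
    induction hy using Submodule.iSup_induction' with
    | mem j y hy =>
      refine ⟨Cj j y * c j, mul_nonneg (hCjnn j y hy) (hc j), 0, fun n => ?_⟩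
      simp only [Function.iterate_zero, id_eq]
      calc infDist y (A (n + 1)) ≤ Cj j y * εj j (n + 1) := hCj j y hy (n + 1)
        _ ≤ Cj j y * εj j n :=
            mul_le_mul_of_nonneg_left ((hεj j).2.1 (Nat.le_succ n)) (hCjnn j y hy)
        _ ≤ Cj j y * (c j * ε n) := mul_le_mul_of_nonneg_left (hcd j n) (hCjnn j y hy)
        _ = Cj j y * c j * ε n := (mul_assoc _ _ _).symm
    | zero =>
      exact ⟨0, le_refl 0, 0, fun n => by rw [hzeroA, zero_mul]⟩
    | add x y hx hy ihx ihy =>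
      obtain ⟨C1, hC1, k1, h1⟩ := ihx
      obtain ⟨C2, hC2, k2, h2⟩ := ihy
      refine ⟨C1 + C2, add_nonneg hC1 hC2, max k1 k2 + 1, fun n => ?_⟩
      set m := K^[max k1 k2] (n + 1) with hm
      have hmi : K^[max k1 k2 + 1] (n + 1) = K m := Function.iterate_succ_apply' K _ _
      have hmne : (A m).Nonempty := hAne m (le_trans (Nat.one_le_iff_ne_zero.mpr (Nat.succ_ne_zero n)) (hiter_ge _ _))
      have hx1 : infDist x (A m) ≤ C1 * ε n := by
        refine le_trans ?_ (h1 n)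
        rcases (A (K^[k1] (n+1))).eq_empty_or_nonempty with he | hne
        · exact absurd (hAne _ (le_trans (Nat.one_le_iff_ne_zero.mpr (Nat.succ_ne_zero n)) (hiter_ge _ _))) (by rw [he]; exact fun h => h.ne_empty rfl)
        · exact infDist_le_infDist_of_subset (hAmono (hiter_mono (n+1) (le_max_left k1 k2))) hne
      have hy1 : infDist y (A m) ≤ C2 * ε n := by
        refine le_trans ?_ (h2 n)
        have hne : (A (K^[k2] (n+1))).Nonempty :=
          hAne _ (le_trans (Nat.one_le_iff_ne_zero.mpr (Nat.succ_ne_zero n)) (hiter_ge _ _))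
        exact infDist_le_infDist_of_subset (hAmono (hiter_mono (n+1) (le_max_right k1 k2))) hne
      rw [hmi]
      calc infDist (x + y) (A (K m)) ≤ infDist x (A m) + infDist y (A m) := hsub x y m hmne
        _ ≤ C1 * ε n + C2 * ε n := add_le_add hx1 hy1
        _ = (C1 + C2) * ε n := (add_mul _ _ _).symm
  -- reindex: build the final error sequence
  set g : ℕ → ℕ → ℕ := fun k m => Nat.findGreatest (fun n => K^[k] (n + 1) ≤ m) m with hg
  have hδ' : ∀ k, NullSeq (fun m => ε (g k m)) := by
    intro k
    refine ⟨fun m => hε.1 _, ?_, ?_⟩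
    · intro m1 m2 h12
      apply hε.2.1
      exact Nat.findGreatest_mono (fun n hn => le_trans hn h12) h12
    · apply hε.2.2.comp
      rw [tendsto_atTop_atTop]
      intro N
      refine ⟨K^[k] (N + 1), fun m hm => ?_⟩
      exact Nat.le_findGreatest (le_trans (le_trans (Nat.le_succ N) (hiter_ge k (N+1))) hm) hm
  obtain ⟨η, hη, hηpos, hdom'⟩ := combine_null (fun k m => ε (g k m)) hδ'
  choose c' hc' hcd' using hdom'
  -- final constant for each element of the span
  have hfinal : ∀ (y : X), y ∈ (⨆ j, Y j : Submodule ℝ X) → ∃ Cy : ℝ, 0 ≤ Cy ∧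
      ∀ m, infDist y (A m) ≤ Cy * η m := by
    intro y hy
    obtain ⟨C, hC0, k, hk⟩ := hP y hy
    set M : ℝ := max (infDist y (A 0)) (infDist y (A 1)) with hM
    have hM0 : 0 ≤ M := le_trans infDist_nonneg (le_max_left _ _)
    set D : ℝ := M / η (K^[k] 1) with hD
    have hD0 : 0 ≤ D := div_nonneg hM0 (hηpos _).le
    refine ⟨C * c' k + D, add_nonneg (mul_nonneg hC0 (hc' k)) hD0, fun m => ?_⟩
    by_cases hcase : K^[k] 1 ≤ m
    · -- the generic case
      have hspec : K^[k] (g k m + 1) ≤ m :=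
        Nat.findGreatest_spec (P := fun n => K^[k] (n + 1) ≤ m) (Nat.zero_le m) hcase
      have hgne : (A (K^[k] (g k m + 1))).Nonempty :=
        hAne _ (le_trans (Nat.one_le_iff_ne_zero.mpr (Nat.succ_ne_zero _)) (hiter_ge _ _))
      have h1 : infDist y (A m) ≤ infDist y (A (K^[k] (g k m + 1))) :=
        infDist_le_infDist_of_subset (hAmono hspec) hgne
      have h2 : infDist y (A (K^[k] (g k m + 1))) ≤ C * ε (g k m) := hk (g k m)
      have h3 : ε (g k m) ≤ c' k * η m := hcd' k m
      have h4 : 0 ≤ D * η m := mul_nonneg hD0 (hηpos m).le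
      calc infDist y (A m) ≤ C * ε (g k m) := le_trans h1 h2
        _ ≤ C * (c' k * η m) := mul_le_mul_of_nonneg_left h3 hC0
        _ = C * c' k * η m := (mul_assoc _ _ _).symm
        _ ≤ C * c' k * η m + D * η m := le_add_of_nonneg_right h4
        _ = (C * c' k + D) * η m := (add_mul _ _ _).symm
    · -- small m : use monotonicity and positivity of η
      push_neg at hcase
      have hinf : infDist y (A m) ≤ M := by
        rcases Nat.eq_zero_or_pos m with rfl | hm1
        · exact le_max_left _ _
        · rcases (A 1).eq_empty_or_nonempty with he | hne
          · exact absurd hA1 (by rw [he]; exact fun h => h.ne_empty rfl)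
          · exact le_trans (infDist_le_infDist_of_subset (hAmono hm1) hA1) (le_max_right _ _)
      have hηm : η (K^[k] 1) ≤ η m := hη.2.1 hcase.le
      have hMD : M = D * η (K^[k] 1) := (div_mul_cancel₀ M (hηpos _).ne').symm
      have h5 : 0 ≤ C * c' k * η m := mul_nonneg (mul_nonneg hC0 (hc' k)) (hηpos m).le
      calc infDist y (A m) ≤ M := hinf
        _ = D * η (K^[k] 1) := hMD
        _ ≤ D * η m := mul_le_mul_of_nonneg_left hηm hD0
        _ ≤ C * c' k * η m + D * η m := le_add_of_nonneg_left h5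
        _ = (C * c' k + D) * η m := (add_mul _ _ _).symm
  choose! Cfun hCfun0 hCfun using hfinal
  exact ⟨η, hη, Cfun, hCfun0, hCfun⟩
end

section
/- Let X be a real Banach space, let (A_i) be an approximation scheme in X, and let Y be a linear subspace of X having a countable (or finite) Hamel basis, i.e., Y is the algebraic linear span of countably many vectors of X. Then Y fails Shapiro's Theorem relative to (A_i): there exist a nonincreasing sequence of nonnegative reals ε_n → 0 and a function C : Y → [0,∞) such that E(y, A_n) ≤ C(y) ε_n for all n and all y ∈ Y. In particular, every finite dimensional subspace of X fails Shapiro's Theorem relative to (A_i). -/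
open Metric Filter Pointwise

set_option linter.unusedSectionVars false
set_option maxHeartbeats 1000000
namespace ShapiroAux


/-- Iterated `K`. -/
def Kit (K : ℕ → ℕ) : ℕ → ℕ → ℕ
  | 0, j => j
  | m + 1, j => K (Kit K m j)

variable {X : Type*} [NormedAddCommGroup X] [NormedSpace ℝ X]
variable {A : ℕ → Set X} {K : ℕ → ℕ}

theorem le_Kit (hK : ∀ n, n ≤ K n ∧ A n + A n ⊆ A (K n)) (m j : ℕ) : j ≤ Kit K m j := by
  induction m with
  | zero => exact le_refl j
  | succ m ih => exact ih.trans (hK (Kit K m j)).1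

theorem monoA (hchain : ∀ n, A n ⊂ A (n + 1)) : Monotone A :=
  monotone_nat_of_le_succ fun n => (hchain n).1.subset

theorem zero_mem' (hscal : ∀ (n : ℕ) (c : ℝ), c • A n ⊆ A n) {n : ℕ}
    (h : (A n).Nonempty) : 0 ∈ A n := by
  obtain ⟨x, hx⟩ := h
  have : (0:ℝ) • x ∈ A n := hscal n 0 (Set.smul_mem_smul_set hx)
  simpa using this

theorem zero_mem (hchain : ∀ n, A n ⊂ A (n + 1)) (hscal : ∀ (n : ℕ) (c : ℝ), c • A n ⊆ A n)
    {n : ℕ} (hn : 1 ≤ n) : 0 ∈ A n := by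
  obtain ⟨x, hx, -⟩ := Set.exists_of_ssubset (hchain 0)
  exact zero_mem' hscal ⟨x, monoA hchain hn hx⟩

theorem d_le_norm (hscal : ∀ (n : ℕ) (c : ℝ), c • A n ⊆ A n) (y : X) (n : ℕ) :
    infDist y (A n) ≤ ‖y‖ := by
  rcases (A n).eq_empty_or_nonempty with h | h
  · simp only [h, infDist_empty]; positivity
  · simpa [dist_zero_right] using infDist_le_dist_of_mem (zero_mem' hscal h)

theorem d_anti (hchain : ∀ n, A n ⊂ A (n + 1)) (hscal : ∀ (n : ℕ) (c : ℝ), c • A n ⊆ A n)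
    (y : X) {m n : ℕ} (hm : 1 ≤ m) (h : m ≤ n) : infDist y (A n) ≤ infDist y (A m) :=
  infDist_le_infDist_of_subset (monoA hchain h) ⟨0, zero_mem hchain hscal hm⟩

theorem d_tendsto (hchain : ∀ n, A n ⊂ A (n + 1)) (hdense : Dense (⋃ n, A n)) (y : X) :
    Tendsto (fun m : ℕ => infDist y (A (m + 1))) atTop (nhds 0) := by
  rw [Metric.tendsto_atTop]
  intro δ hδ
  have hy := hdense y
  rw [Metric.mem_closure_iff] at hy
  obtain ⟨a, ha, hd⟩ := hy δ hδ
  obtain ⟨_, ⟨n0, rfl⟩, ha⟩ := ha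
  refine ⟨n0, fun m hm => ?_⟩
  have h1 : a ∈ A (m + 1) := monoA hchain (hm.trans (Nat.le_succ m)) ha
  have h2 : infDist y (A (m + 1)) ≤ dist y a := infDist_le_dist_of_mem h1
  rw [Real.dist_eq, sub_zero, abs_of_nonneg infDist_nonneg]
  linarith

theorem sum_mem_Kit (hchain : ∀ n, A n ⊂ A (n + 1))
    (hK : ∀ n, n ≤ K n ∧ A n + A n ⊆ A (K n))
    (hscal : ∀ (n : ℕ) (c : ℝ), c • A n ⊆ A n)
    {ι : Type*} (F : Finset ι) (a : ι → X) {j : ℕ} (hj : 1 ≤ j)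
    (ha : ∀ i ∈ F, a i ∈ A j) : (∑ i ∈ F, a i) ∈ A (Kit K F.card j) := by
  induction F using Finset.cons_induction with
  | empty => simpa [Kit] using zero_mem hchain hscal hj
  | cons i F hi ih =>
    rw [Finset.sum_cons, Finset.card_cons]
    have hrest := ih fun i' hi' => ha i' (Finset.mem_cons_of_mem hi')
    have h1 : a i ∈ A (Kit K F.card j) :=
      monoA hchain (le_Kit hK F.card j) (ha i (Finset.mem_cons_self i F))
    exact (hK (Kit K F.card j)).2 (Set.add_mem_add h1 hrest)

theorem approx (hchain : ∀ n, A n ⊂ A (n + 1))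
    (hK : ∀ n, n ≤ K n ∧ A n + A n ⊆ A (K n))
    (hscal : ∀ (n : ℕ) (c : ℝ), c • A n ⊆ A n)
    (c : X →₀ ℝ) {j : ℕ} (hj : 1 ≤ j) :
    infDist (c.sum fun x r => r • x) (A (Kit K c.support.card j)) ≤
      ∑ x ∈ c.support, |c x| * infDist x (A j) := by
  have hAj : (A j).Nonempty := ⟨0, zero_mem hchain hscal hj⟩
  refine le_of_forall_pos_le_add fun η hη => ?_
  set S := ∑ x ∈ c.support, |c x| with hSdef
  have hS0 : 0 ≤ S := Finset.sum_nonneg fun x _ => abs_nonneg _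
  set η' := η / (S + 1) with hη'def
  have hη' : 0 < η' := div_pos hη (by linarith)
  have key : ∀ x : X, ∃ a : X, x ∈ c.support → a ∈ A j ∧ dist x a < infDist x (A j) + η' := by
    intro x
    by_cases hx : x ∈ c.support
    · obtain ⟨a, h1, h2⟩ := (infDist_lt_iff hAj).mp (lt_add_of_pos_right _ hη')
      exact ⟨a, fun _ => ⟨h1, h2⟩⟩
    · exact ⟨0, fun h => absurd h hx⟩
  choose a ha using key
  set b := ∑ x ∈ c.support, c x • a x with hbdef
  have hb : b ∈ A (Kit K c.support.card j) := by
    refine sum_mem_Kit hchain hK hscal _ _ hj fun x hx => ?_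
    exact hscal j (c x) (Set.smul_mem_smul_set (ha x hx).1)
  have h1 : infDist (c.sum fun x r => r • x) (A (Kit K c.support.card j)) ≤
      dist (c.sum fun x r => r • x) b := infDist_le_dist_of_mem hb
  have h2 : dist (c.sum fun x r => r • x) b ≤ ∑ x ∈ c.support, |c x| * dist x (a x) := by
    rw [dist_eq_norm, Finsupp.sum, hbdef, ← Finset.sum_sub_distrib]
    refine (norm_sum_le _ _).trans (Finset.sum_le_sum fun x hx => ?_)
    rw [← smul_sub, norm_smul, Real.norm_eq_abs, ← dist_eq_norm]
  have h3 : ∑ x ∈ c.support, |c x| * dist x (a x) ≤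
      ∑ x ∈ c.support, |c x| * (infDist x (A j) + η') := by
    refine Finset.sum_le_sum fun x hx => ?_
    exact mul_le_mul_of_nonneg_left (le_of_lt (ha x hx).2) (abs_nonneg _)
  have h4 : ∑ x ∈ c.support, |c x| * (infDist x (A j) + η') =
      (∑ x ∈ c.support, |c x| * infDist x (A j)) + η' * S := by
    rw [hSdef, Finset.mul_sum, ← Finset.sum_add_distrib]
    exact Finset.sum_congr rfl fun x _ => by ring
  have h5 : η' * S ≤ η := by
    rw [hη'def]
    rw [div_mul_eq_mul_div, div_le_iff₀ (by linarith : (0:ℝ) < S + 1)]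
    nlinarith
  linarith


theorem key {X : Type*} [NormedAddCommGroup X] [NormedSpace ℝ X]
    (A : ℕ → Set X) (K : ℕ → ℕ) (hA : IsApproximationScheme A K)
    (s : Set X) (hs : s.Countable) : FailsShapiroFor (Submodule.span ℝ s : Set X) A := by
  classical
  obtain ⟨hchain, hK, hscal, hdense⟩ := hA
  obtain ⟨f, hf⟩ := (hs.insert 0).exists_eq_range (Set.insert_nonempty 0 s)
  set D : ℕ → ℕ → ℝ := fun k n => infDist (f k) (A (n + 1)) with hD
  have hDnonneg : ∀ k t, 0 ≤ D k t := fun k t => infDist_nonneg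
  set b : ℕ → ℕ → ℝ := fun p t => ∑ k ∈ Finset.range p, D k t with hb
  set B : ℕ → ℝ := fun p => ∑ k ∈ Finset.range p, ‖f k‖ with hB
  have hBpos : ∀ p, 0 < B p + 1 := fun p => by
    have : 0 ≤ B p := Finset.sum_nonneg fun k _ => norm_nonneg _
    linarith
  have hbnonneg : ∀ p t, 0 ≤ b p t := fun p t =>
    Finset.sum_nonneg fun k _ => hDnonneg k t
  have hbB : ∀ p t, b p t ≤ B p := fun p t =>
    Finset.sum_le_sum fun k _ => d_le_norm hscal (f k) _
  have hbanti : ∀ p, Antitone (b p) := fun p t t' htt' =>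
    Finset.sum_le_sum fun k _ =>
      d_anti hchain hscal (f k) (Nat.succ_le_succ (Nat.zero_le _)) (Nat.succ_le_succ htt')
  have hbtend : ∀ p, Tendsto (b p) atTop (nhds 0) := by
    intro p
    have h := tendsto_finset_sum (Finset.range p)
      (fun k (_ : k ∈ Finset.range p) => d_tendsto hchain hdense (f k))
    simpa using h
  set g : ℕ → ℕ → ℕ := fun q n => Nat.findGreatest (fun j => 1 ≤ j ∧ Kit K q j ≤ n) n with hg
  have hgmono : ∀ q (n n' : ℕ), n ≤ n' → g q n ≤ g q n' := by
    intro q n n' hnn'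
    exact Nat.findGreatest_mono (fun j hj => ⟨hj.1, hj.2.trans hnn'⟩) hnn'
  have hgtop : ∀ q, Tendsto (fun n => g q n - 1) atTop atTop := by
    intro q
    rw [tendsto_atTop_atTop]
    intro J
    refine ⟨max (Kit K q (J + 1)) (J + 1), fun n hn => ?_⟩
    have h1 : J + 1 ≤ g q n := Nat.le_findGreatest (le_trans (le_max_right _ _) hn)
      ⟨Nat.succ_le_succ (Nat.zero_le _), le_trans (le_max_left _ _) hn⟩
    omega
  set c : ℕ → ℕ → ℝ := fun r n =>
    b (Nat.unpair r).1 (g (Nat.unpair r).2 n - 1) / (B (Nat.unpair r).1 + 1) with hc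
  have hcnonneg : ∀ r n, 0 ≤ c r n := fun r n => div_nonneg (hbnonneg _ _) (hBpos _).le
  have hcle1 : ∀ r n, c r n ≤ 1 := fun r n => by
    rw [hc]
    rw [div_le_one (hBpos _)]
    have := hbB (Nat.unpair r).1 (g (Nat.unpair r).2 n - 1)
    linarith
  have hcanti : ∀ r (n n' : ℕ), n ≤ n' → c r n' ≤ c r n := by
    intro r n n' h
    have h1 : g (Nat.unpair r).2 n - 1 ≤ g (Nat.unpair r).2 n' - 1 :=
      Nat.sub_le_sub_right (hgmono _ _ _ h) 1
    rw [hc]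
    exact div_le_div_of_nonneg_right (hbanti _ h1) (hBpos _).le
  have hctend : ∀ r, Tendsto (fun n => c r n) atTop (nhds 0) := by
    intro r
    have h1 : Tendsto (fun n => b (Nat.unpair r).1 (g (Nat.unpair r).2 n - 1)) atTop (nhds 0) :=
      (hbtend _).comp (hgtop _)
    have h2 := h1.div_const (B (Nat.unpair r).1 + 1)
    simpa [hc] using h2
  set ε : ℕ → ℝ := fun n => (1/2:ℝ)^n + ∑' r : ℕ, (1/2:ℝ)^r * c r n with hε
  have hgeo : Summable (fun r : ℕ => (1/2:ℝ)^r) :=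
    summable_geometric_of_lt_one (by norm_num) (by norm_num)
  have hsum : ∀ n, Summable (fun r : ℕ => (1/2:ℝ)^r * c r n) := by
    intro n
    refine Summable.of_nonneg_of_le
      (fun r => mul_nonneg (by positivity) (hcnonneg r n)) (fun r => ?_) hgeo
    calc (1/2:ℝ)^r * c r n ≤ (1/2:ℝ)^r * 1 :=
          mul_le_mul_of_nonneg_left (hcle1 r n) (by positivity)
      _ = (1/2:ℝ)^r := mul_one _
  have htsumnonneg : ∀ n, 0 ≤ ∑' r : ℕ, (1/2:ℝ)^r * c r n := fun n =>
    tsum_nonneg fun r => mul_nonneg (by positivity) (hcnonneg r n)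
  have hεnonneg : ∀ n, 0 ≤ ε n := fun n => add_nonneg (by positivity) (htsumnonneg n)
  have hεanti : Antitone ε := by
    refine antitone_nat_of_succ_le fun n => ?_
    refine add_le_add (pow_le_pow_of_le_one (by norm_num) (by norm_num) (Nat.le_succ n)) ?_
    exact Summable.tsum_le_tsum
      (fun r => mul_le_mul_of_nonneg_left (hcanti r n (n+1) (Nat.le_succ n)) (by positivity))
      (hsum _) (hsum _)
  have hεtend : Tendsto ε atTop (nhds 0) := by
    have h1 : Tendsto (fun n : ℕ => (1/2:ℝ)^n) atTop (nhds 0) :=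
      tendsto_pow_atTop_nhds_zero_of_lt_one (by norm_num) (by norm_num)
    have h2 : Tendsto (fun n => ∑' r : ℕ, (1/2:ℝ)^r * c r n) atTop
        (nhds (∑' _ : ℕ, (0:ℝ))) := by
      refine tendsto_tsum_of_dominated_convergence hgeo (fun r => ?_) ?_
      · simpa using (hctend r).const_mul ((1/2:ℝ)^r)
      · filter_upwards with n r
        rw [Real.norm_eq_abs, abs_of_nonneg (mul_nonneg (by positivity) (hcnonneg r n))]
        calc (1/2:ℝ)^r * c r n ≤ (1/2:ℝ)^r * 1 :=
              mul_le_mul_of_nonneg_left (hcle1 r n) (by positivity)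
          _ = (1/2:ℝ)^r := mul_one _
    have h3 : Tendsto (fun n => (1/2:ℝ)^n + ∑' r : ℕ, (1/2:ℝ)^r * c r n) atTop
        (nhds (0 + ∑' _ : ℕ, (0:ℝ))) := h1.add h2
    rw [hε]
    simpa using h3
  have hεlow : ∀ n, (1/2:ℝ)^n ≤ ε n := fun n => le_add_of_nonneg_right (htsumnonneg n)
  have hεkey : ∀ r n, c r n ≤ 2^r * ε n := by
    intro r n
    have h1 : (1/2:ℝ)^r * c r n ≤ ε n := by
      refine le_add_of_nonneg_of_le (by positivity) ?_
      exact Summable.le_tsum (hsum n) r fun j _ => mul_nonneg (by positivity) (hcnonneg j n)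
    have h2 : (2:ℝ)^r * (1/2:ℝ)^r = 1 := by
      rw [one_div, inv_pow, mul_inv_cancel₀ (by positivity)]
    calc c r n = (2:ℝ)^r * ((1/2:ℝ)^r * c r n) := by rw [← mul_assoc, h2, one_mul]
      _ ≤ (2:ℝ)^r * ε n := mul_le_mul_of_nonneg_left h1 (by positivity)
  refine ⟨ε, ⟨hεnonneg, hεanti, hεtend⟩, ?_⟩
  have H : ∀ y : X, ∃ Cy : ℝ, 0 ≤ Cy ∧
      (y ∈ (Submodule.span ℝ s : Set X) → ∀ n, infDist y (A n) ≤ Cy * ε n) := by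
    intro y
    by_cases hy : y ∈ (Submodule.span ℝ s : Set X)
    swap
    · exact ⟨0, le_refl 0, fun h => absurd h hy⟩
    have hy2 : y ∈ Submodule.span ℝ (insert 0 s) := by
      rw [Submodule.span_insert_zero]; exact hy
    obtain ⟨c0, hsupp, hsum0⟩ := Submodule.mem_span_set.mp hy2
    have hsupp' : (c0.support : Set X) ⊆ Set.range f := hf ▸ hsupp
    have hκ0 : ∀ x : X, ∃ k : ℕ, x ∈ c0.support → f k = x := by
      intro x
      by_cases hx : x ∈ c0.support
      · obtain ⟨k, hk⟩ := hsupp' hx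
        exact ⟨k, fun _ => hk⟩
      · exact ⟨0, fun h => absurd h hx⟩
    choose κ hκ using hκ0
    set q := c0.support.card with hq
    set p := c0.support.sup κ + 1 with hp
    set r := Nat.pair p q with hr
    set N := Kit K q 1 with hN
    set S := ∑ x ∈ c0.support, |c0 x| with hS
    have hS0 : 0 ≤ S := Finset.sum_nonneg fun x _ => abs_nonneg _
    have hCy0 : 0 ≤ S * (B p + 1) * 2^r + ‖y‖ * 2^N := by
      have := hBpos p
      positivity
    refine ⟨S * (B p + 1) * 2^r + ‖y‖ * 2^N, hCy0, fun _ n => ?_⟩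
    by_cases hn : N ≤ n
    · -- main case
      set j := g q n with hj
      have hjP : 1 ≤ j ∧ Kit K q j ≤ n := by
        have h := Nat.findGreatest_spec (P := fun j => 1 ≤ j ∧ Kit K q j ≤ n) (m := 1) (n := n)
          (le_trans (le_Kit hK q 1) hn) ⟨le_refl 1, hn⟩
        simpa only [hj, hg] using h
      have h1 : infDist y (A n) ≤ infDist y (A (Kit K q j)) :=
        d_anti hchain hscal y (le_trans hjP.1 (le_Kit hK q j)) hjP.2
      have h2 : infDist y (A (Kit K q j)) ≤ ∑ x ∈ c0.support, |c0 x| * infDist x (A j) := by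
        have h := approx hchain hK hscal c0 hjP.1
        rwa [hsum0, ← hq] at h
      have h3 : ∀ x ∈ c0.support, infDist x (A j) = D (κ x) (j - 1) := by
        intro x hx
        have hjj : j - 1 + 1 = j := Nat.succ_pred_eq_of_pos hjP.1
        show infDist x (A j) = infDist (f (κ x)) (A (j - 1 + 1))
        rw [hκ x hx, hjj]
      have h4 : ∑ x ∈ c0.support, |c0 x| * infDist x (A j) ≤ S * b p (j - 1) := by
        have step1 : ∑ x ∈ c0.support, |c0 x| * infDist x (A j) ≤
            ∑ x ∈ c0.support, S * D (κ x) (j - 1) := by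
          refine Finset.sum_le_sum fun x hx => ?_
          rw [h3 x hx]
          exact mul_le_mul_of_nonneg_right
            (Finset.single_le_sum (f := fun x => |c0 x|) (fun x _ => abs_nonneg _) hx)
            (hDnonneg _ _)
        have hinj : ∀ x ∈ c0.support, ∀ x' ∈ c0.support, κ x = κ x' → x = x' := by
          intro x hx x' hx' h
          rw [← hκ x hx, ← hκ x' hx', h]
        have step2 : ∑ k ∈ c0.support.image κ, D k (j - 1) =
            ∑ x ∈ c0.support, D (κ x) (j - 1) := Finset.sum_image hinj
        have step3 : ∑ k ∈ c0.support.image κ, D k (j - 1) ≤ b p (j - 1) := by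
          refine Finset.sum_le_sum_of_subset_of_nonneg ?_ (fun k _ _ => hDnonneg _ _)
          intro k hk
          obtain ⟨x, hx, rfl⟩ := Finset.mem_image.mp hk
          exact Finset.mem_range.mpr (Nat.lt_succ_of_le (Finset.le_sup hx))
        calc ∑ x ∈ c0.support, |c0 x| * infDist x (A j)
            ≤ ∑ x ∈ c0.support, S * D (κ x) (j - 1) := step1
          _ = S * ∑ x ∈ c0.support, D (κ x) (j - 1) := by rw [Finset.mul_sum]
          _ = S * ∑ k ∈ c0.support.image κ, D k (j - 1) := by rw [← step2]
          _ ≤ S * b p (j - 1) := mul_le_mul_of_nonneg_left step3 hS0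
      have h5 : b p (j - 1) = (B p + 1) * c r n := by
        simp only [hc, hr, Nat.unpair_pair, ← hj]
        rw [mul_comm, div_mul_cancel₀ _ (ne_of_gt (hBpos p))]
      calc infDist y (A n) ≤ S * b p (j - 1) := le_trans h1 (le_trans h2 h4)
        _ = S * ((B p + 1) * c r n) := by rw [h5]
        _ ≤ S * ((B p + 1) * (2^r * ε n)) := by
            refine mul_le_mul_of_nonneg_left
              (mul_le_mul_of_nonneg_left (hεkey r n) (hBpos p).le) hS0
        _ = (S * (B p + 1) * 2^r) * ε n := by ring
        _ ≤ (S * (B p + 1) * 2^r + ‖y‖ * 2^N) * ε n := by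
            refine mul_le_mul_of_nonneg_right (le_add_of_nonneg_right (by positivity))
              (hεnonneg n)
    · -- small n
      push_neg at hn
      have h1 : infDist y (A n) ≤ ‖y‖ := d_le_norm hscal y n
      have hhalf : ((1:ℝ)/2)^N ≤ (1/2:ℝ)^n :=
        pow_le_pow_of_le_one (by norm_num) (by norm_num) (le_of_lt hn)
      have hNe : (2:ℝ)^N * (1/2:ℝ)^N = 1 := by
        rw [one_div, inv_pow, mul_inv_cancel₀ (by positivity)]
      have h2 : (1:ℝ) ≤ 2^N * (1/2:ℝ)^n := by
        calc (1:ℝ) = 2^N * (1/2:ℝ)^N := hNe.symm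
          _ ≤ 2^N * (1/2:ℝ)^n := mul_le_mul_of_nonneg_left hhalf (by positivity)
      calc infDist y (A n) ≤ ‖y‖ := h1
        _ = ‖y‖ * 1 := (mul_one _).symm
        _ ≤ ‖y‖ * (2^N * (1/2:ℝ)^n) := mul_le_mul_of_nonneg_left h2 (norm_nonneg y)
        _ = ‖y‖ * 2^N * (1/2:ℝ)^n := by ring
        _ ≤ ‖y‖ * 2^N * ε n := mul_le_mul_of_nonneg_left (hεlow n) (by positivity)
        _ ≤ (S * (B p + 1) * 2^r + ‖y‖ * 2^N) * ε n := by
            refine mul_le_mul_of_nonneg_right ?_ (hεnonneg n)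
            have h3 : 0 ≤ S * (B p + 1) * 2^r := by
              have := hBpos p
              positivity
            linarith
  choose C hC0 hC using H
  exact ⟨C, fun y _ => hC0 y, fun y hy n => hC y hy n⟩

end ShapiroAux

/-- Every subspace of `X` with a finite or countable Hamel basis (i.e., the linear span of
a countable set) fails Shapiro's Theorem relative to any approximation scheme `(A n)`; in
particular, every finite dimensional subspace of `X` fails Shapiro's Theorem. -/
theorem countable_span_fails_shapiro
    {X : Type*} [NormedAddCommGroup X] [NormedSpace ℝ X] [CompleteSpace X]
    (A : ℕ → Set X) (K : ℕ → ℕ) (hA : IsApproximationScheme A K) :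
    (∀ s : Set X, s.Countable → FailsShapiroFor (Submodule.span ℝ s : Set X) A) ∧
    (∀ Y : Submodule ℝ X, FiniteDimensional ℝ Y → FailsShapiroFor (Y : Set X) A) := by
  refine ⟨fun s hs => ShapiroAux.key A K hA s hs, fun Y hY => ?_⟩
  obtain ⟨S, hS⟩ := (Submodule.fg_iff_finiteDimensional Y).mpr hY
  have h := ShapiroAux.key A K hA (↑S) S.countable_toSet
  rwa [hS] at h
end

section
/- Let X be a real Banach space, let (A_n) be an approximation scheme in X satisfying Shapiro's Theorem, and let F be a finite dimensional linear subspace of X. Then the approximation scheme (A_n + F) (where A_n + F = {a + f : a ∈ A_n, f ∈ F}) also satisfies Shapiro's Theorem: for every nonincreasing sequence of nonnegative reals ε_n → 0 there exists x ∈ X such that there is no constant C with E(x, A_n + F) ≤ C ε_n for all n. -/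
open Metric Filter Pointwise

section Aux

variable {X : Type*} [NormedAddCommGroup X] [NormedSpace ℝ X]
variable {A : ℕ → Set X} {K : ℕ → ℕ}

private lemma AS_mono (hA : IsApproximationScheme A K) : Monotone A :=
  monotone_nat_of_le_succ fun n => (hA.1 n).le

private lemma AS_zero_mem (hA : IsApproximationScheme A K) {n : ℕ} (hn : 1 ≤ n) :
    (0 : X) ∈ A n := by
  obtain ⟨x, hx, -⟩ := Set.exists_of_ssubset (hA.1 0)
  have : (0 : X) ∈ A 1 := hA.2.2.1 1 (0:ℝ) (Set.mem_smul_set.mpr ⟨x, hx, by simp⟩)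
  exact AS_mono hA hn this

private lemma AS_nonempty (hA : IsApproximationScheme A K) {n : ℕ} (hn : 1 ≤ n) :
    (A n).Nonempty := ⟨0, AS_zero_mem hA hn⟩

/-- distance to a scalar-invariant set scales. -/
private lemma infDist_smul_le {s : Set X} (hs : ∀ c : ℝ, c • s ⊆ s) (c : ℝ) (x : X) :
    infDist (c • x) s ≤ |c| * infDist x s := by
  rcases s.eq_empty_or_nonempty with rfl | hne
  · simp [Metric.infDist_empty]
  rcases eq_or_ne c 0 with rfl | hc
  · have h0 : (0 : X) ∈ s := by
      obtain ⟨a, ha⟩ := hne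
      exact hs 0 (Set.mem_smul_set.mpr ⟨a, ha, by simp⟩)
    have h2 : infDist ((0:ℝ) • x) s ≤ 0 := by
      rw [zero_smul]
      simpa using infDist_le_dist_of_mem (x := (0:X)) h0
    calc infDist ((0:ℝ) • x) s ≤ 0 := h2
      _ ≤ |(0:ℝ)| * infDist x s := by simp
  refine le_of_forall_pos_le_add fun σ hσ => ?_
  have hcpos : 0 < |c| := abs_pos.mpr hc
  have h1 : infDist x s < infDist x s + σ / |c| := by
    have := div_pos hσ hcpos; linarith
  obtain ⟨a, ha, hda⟩ := (infDist_lt_iff hne).mp h1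
  have hca : c • a ∈ s := hs c (Set.mem_smul_set.mpr ⟨a, ha, rfl⟩)
  calc infDist (c • x) s ≤ dist (c • x) (c • a) := infDist_le_dist_of_mem hca
    _ = |c| * dist x a := by
        rw [dist_eq_norm, dist_eq_norm, ← smul_sub, norm_smul, Real.norm_eq_abs]
    _ ≤ |c| * (infDist x s + σ / |c|) := by
        exact mul_le_mul_of_nonneg_left hda.le hcpos.le
    _ = |c| * infDist x s + σ := by field_simp
    _ ≤ _ := by nlinarith [infDist_nonneg (x := x) (s := s)]

private lemma infDist_le_norm (hA : IsApproximationScheme A K) (x : X) (n : ℕ) :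
    infDist x (A n) ≤ ‖x‖ := by
  rcases (A n).eq_empty_or_nonempty with h | hne
  · rw [h, Metric.infDist_empty]; positivity
  · obtain ⟨a, ha⟩ := hne
    have h0 : (0 : X) ∈ A n := hA.2.2.1 n (0:ℝ) (Set.mem_smul_set.mpr ⟨a, ha, by simp⟩)
    simpa using infDist_le_dist_of_mem (x := x) h0

/-- Step 2: remove the finite dimensional part, by induction on the dimension. -/
private lemma step2 (hA : IsApproximationScheme A K) (d : ℕ) :
    ∀ (F : Submodule ℝ X), FiniteDimensional ℝ F → Module.finrank ℝ F ≤ d →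
    ∀ n₀, 1 ≤ n₀ → (∀ x, infDist x (A n₀ + (F : Set X)) ≤ 2⁻¹ * ‖x‖) →
    ∃ m, 1 ≤ m ∧ ∀ x, infDist x (A m) ≤ (3/4 : ℝ) * ‖x‖ := by
  induction d with
  | zero =>
    intro F hF hrank n₀ hn₀ hyp
    haveI := hF
    have hbot : F = ⊥ := Submodule.finrank_eq_zero.mp (le_antisymm hrank (Nat.zero_le _))
    refine ⟨n₀, hn₀, fun x => ?_⟩
    have := hyp x
    rw [hbot, Submodule.bot_coe, Set.add_singleton] at this
    simp only [add_zero, Set.image_id'] at this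
    nlinarith [norm_nonneg x]
  | succ d ih =>
    intro F hF hrank n₀ hn₀ hyp
    haveI := hF
    have hAne : (A n₀).Nonempty := AS_nonempty hA hn₀
    have hBne : (A n₀ + (F : Set X)).Nonempty :=
      ⟨0 + 0, Set.add_mem_add (AS_zero_mem hA hn₀) (by simp : (0:X) ∈ (F : Set X))⟩
    by_cases hbot : F = ⊥
    · refine ⟨n₀, hn₀, fun x => ?_⟩
      have := hyp x
      rw [hbot, Submodule.bot_coe, Set.add_singleton] at this
      simp only [add_zero, Set.image_id'] at this
      nlinarith [norm_nonneg x]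
    by_cases hdeg : ∃ u : X, u ∈ F ∧ u ≠ 0 ∧ infDist u (A n₀) = 0
    · -- Case 1 : some direction of F is in the closure of A n₀; split it off.
      obtain ⟨u, huF, hu0, hud⟩ := hdeg
      set u' : F := ⟨u, huF⟩ with hu'
      have hu'0 : u' ≠ 0 := fun h => hu0 (by simpa [hu'] using congrArg (Submodule.subtype F) h)
      obtain ⟨W, hW⟩ := Submodule.exists_isCompl (Submodule.span ℝ {u'})
      set F' : Submodule ℝ X := W.map F.subtype with hF'def
      have hF'le : F' ≤ F := Submodule.map_subtype_le F W
      haveI hF'fd : FiniteDimensional ℝ F' := Submodule.finiteDimensional_of_le hF'le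
      have hrank' : Module.finrank ℝ F' ≤ d := by
        have h1 : Module.finrank ℝ (Submodule.span ℝ {u'}) + Module.finrank ℝ W
            = Module.finrank ℝ F := Submodule.finrank_add_eq_of_isCompl hW
        rw [finrank_span_singleton hu'0] at h1
        have h2 : Module.finrank ℝ F' = Module.finrank ℝ W :=
          Submodule.finrank_map_subtype_eq F W
        omega
      refine ih F' hF'fd hrank' (K n₀) (le_trans hn₀ (hA.2.1 n₀).1) fun x => ?_
      refine le_of_forall_pos_le_add fun σ hσ => ?_
      have h1 : infDist x (A n₀ + (F : Set X)) < 2⁻¹ * ‖x‖ + σ / 2 :=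
        lt_of_le_of_lt (hyp x) (by linarith)
      obtain ⟨p, hp, hdp⟩ := (infDist_lt_iff hBne).mp h1
      obtain ⟨a, ha, f, hf, rfl⟩ := Set.mem_add.mp hp
      -- decompose f = t • u + z with z ∈ F'
      have hftop : (⟨f, hf⟩ : F) ∈ Submodule.span ℝ {u'} ⊔ W := by
        rw [hW.sup_eq_top]; trivial
      obtain ⟨y, hy, z, hz, hyz⟩ := Submodule.mem_sup.mp hftop
      obtain ⟨t, rfl⟩ := Submodule.mem_span_singleton.mp hy
      have hfeq : f = t • u + (z : X) := by
        have := congrArg (Submodule.subtype F) hyz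
        simpa [hu'] using this.symm
      have htu : infDist (t • u) (A n₀) = 0 :=
        le_antisymm (by simpa [hud] using infDist_smul_le (hA.2.2.1 n₀) t u) infDist_nonneg
      have h2 : infDist (t • u) (A n₀) < σ / 2 := by rw [htu]; positivity
      obtain ⟨b, hb, hdb⟩ := (infDist_lt_iff hAne).mp h2
      have hq : (a + b) + (z : X) ∈ A (K n₀) + (F' : Set X) := by
        refine Set.add_mem_add ((hA.2.1 n₀).2 (Set.add_mem_add ha hb)) ?_
        exact ⟨z, hz, rfl⟩
      have heq : a + f - (a + b + (z : X)) = t • u - b := by rw [hfeq]; abel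
      calc infDist x (A (K n₀) + (F' : Set X)) ≤ dist x (a + b + (z : X)) :=
            infDist_le_dist_of_mem hq
        _ ≤ dist x (a + f) + dist (a + f) (a + b + (z : X)) := dist_triangle _ _ _
        _ ≤ (2⁻¹ * ‖x‖ + σ / 2) + ‖t • u - b‖ := by
            rw [dist_eq_norm (a + f), heq]
            exact add_le_add hdp.le le_rfl
        _ ≤ 2⁻¹ * ‖x‖ + σ := by
            rw [← dist_eq_norm]
            linarith
    · -- Case 2 : F stays uniformly away from A n₀.
      push_neg at hdeg
      haveI : ProperSpace F := FiniteDimensional.proper ℝ F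
      set S : Set X := (fun v : F => (v : X)) '' (sphere (0 : F) 1) with hSdef
      have hScomp : IsCompact S := (isCompact_sphere (0 : F) 1).image continuous_subtype_val
      have hSmem : ∀ w ∈ S, w ∈ F ∧ ‖w‖ = 1 := by
        rintro w ⟨v, hv, rfl⟩
        exact ⟨v.2, by simpa using mem_sphere_zero_iff_norm.mp hv⟩
      have hSmem' : ∀ w : X, w ∈ F → ‖w‖ = 1 → w ∈ S := by
        intro w hwF hw1
        exact ⟨⟨w, hwF⟩, mem_sphere_zero_iff_norm.mpr (by simpa using hw1), rfl⟩
      have hSne : S.Nonempty := by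
        obtain ⟨v, hvF, hv0⟩ := (Submodule.ne_bot_iff F).mp hbot
        refine ⟨‖v‖⁻¹ • v, hSmem' _ (F.smul_mem _ hvF) ?_⟩
        rw [norm_smul, norm_inv, norm_norm]
        field_simp [norm_ne_zero_iff.mpr hv0]
      obtain ⟨u₀, hu₀S, hmin⟩ := hScomp.exists_isMinOn hSne
        (continuous_infDist_pt (A n₀)).continuousOn
      set η : ℝ := infDist u₀ (A n₀) with hηdef
      have hη0 : 0 < η := by
        obtain ⟨hu₀F, hu₀1⟩ := hSmem u₀ hu₀S
        have : u₀ ≠ 0 := by intro h; rw [h] at hu₀1; simp at hu₀1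
        exact lt_of_le_of_ne infDist_nonneg (Ne.symm (hdeg u₀ hu₀F this))
      -- lower bound : distance from f ∈ F to A n₀ is at least η ‖f‖
      have hlow : ∀ f ∈ F, ∀ a ∈ A n₀, η * ‖f‖ ≤ dist f a := by
        intro f hfF a ha
        rcases eq_or_ne f 0 with rfl | hf0
        · simp only [norm_zero, mul_zero]
          exact dist_nonneg
        have hnf : (0:ℝ) < ‖f‖ := norm_pos_iff.mpr hf0
        have hwS : ‖f‖⁻¹ • f ∈ S := by
          refine hSmem' _ (F.smul_mem _ hfF) ?_
          rw [norm_smul, norm_inv, norm_norm]; field_simp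
        have h1 : η ≤ infDist (‖f‖⁻¹ • f) (A n₀) := hmin hwS
        have h2 : infDist (‖f‖⁻¹ • f) (A n₀) ≤ dist (‖f‖⁻¹ • f) (‖f‖⁻¹ • a) :=
          infDist_le_dist_of_mem (hA.2.2.1 n₀ ‖f‖⁻¹ ⟨a, ha, rfl⟩)
        have h3 : dist (‖f‖⁻¹ • f) (‖f‖⁻¹ • a) = ‖f‖⁻¹ * dist f a := by
          rw [dist_eq_norm, dist_eq_norm, ← smul_sub, norm_smul, norm_inv, norm_norm]
        rw [h3] at h2
        have := le_trans h1 h2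
        calc η * ‖f‖ ≤ (‖f‖⁻¹ * dist f a) * ‖f‖ := mul_le_mul_of_nonneg_right this hnf.le
          _ = dist f a := by field_simp
      -- a level N approximating the whole of F within (η/16)‖·‖
      have hNet : ∃ N, 1 ≤ N ∧ ∀ f ∈ F, infDist f (A N) ≤ η / 16 * ‖f‖ := by
        set δ : ℝ := η / 16 with hδdef
        have hδ0 : 0 < δ := by positivity
        have hch : ∀ w : X, w ∈ S → ∃ (nu : ℕ) (yu : X), yu ∈ A nu ∧ dist w yu < δ / 2 := by
          intro w _
          have hwcl : w ∈ closure (⋃ n, A n) := hA.2.2.2 w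
          obtain ⟨y, hy, hdy⟩ := Metric.mem_closure_iff.mp hwcl (δ/2) (by positivity)
          obtain ⟨n, hn⟩ := Set.mem_iUnion.mp hy
          exact ⟨n, y, hn, hdy⟩
        choose! nn yy hy1 hy2 using hch
        have hcover : S ⊆ ⋃ i : S, ball (i : X) (δ / 2) := by
          intro w hw
          exact Set.mem_iUnion.mpr ⟨⟨w, hw⟩, mem_ball_self (by positivity)⟩
        obtain ⟨t, ht⟩ := hScomp.elim_finite_subcover (fun i : S => ball (i : X) (δ/2))
          (fun i => isOpen_ball) hcover
        set N : ℕ := max 1 (t.sup fun i => nn (i : X)) with hNdef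
        have h1N : 1 ≤ N := by rw [hNdef]; exact le_max_left _ _
        have hsupN : (t.sup fun i => nn (i : X)) ≤ N := by rw [hNdef]; exact le_max_right _ _
        have hNS : ∀ w ∈ S, infDist w (A N) ≤ δ := by
          intro w hw
          obtain ⟨i, hit, hwi⟩ := Set.mem_iUnion₂.mp (ht hw)
          have h1 : dist w (yy (i : X)) ≤ dist w (i : X) + dist (i : X) (yy (i : X)) :=
            dist_triangle _ _ _
          have h2 : dist w (i : X) < δ / 2 := mem_ball.mp hwi
          have h3 : dist (i : X) (yy (i : X)) < δ / 2 := hy2 (i : X) i.2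
          have hmemN : yy (i : X) ∈ A N := by
            refine AS_mono hA ?_ (hy1 (i : X) i.2)
            exact le_trans (Finset.le_sup (f := fun i : S => nn (i : X)) hit) hsupN
          exact le_trans (infDist_le_dist_of_mem hmemN) (by linarith)
        refine ⟨N, h1N, fun f hfF => ?_⟩
        rcases eq_or_ne f 0 with rfl | hf0
        · have h0 : (0:X) ∈ A N := AS_zero_mem hA h1N
          simpa using infDist_le_dist_of_mem (x := (0:X)) h0
        have hnf : (0:ℝ) < ‖f‖ := norm_pos_iff.mpr hf0
        have hwS : ‖f‖⁻¹ • f ∈ S := by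
          refine hSmem' _ (F.smul_mem _ hfF) ?_
          rw [norm_smul, norm_inv, norm_norm]; field_simp
        have hfw : f = ‖f‖ • (‖f‖⁻¹ • f) := (smul_inv_smul₀ hnf.ne' f).symm
        calc infDist f (A N) = infDist (‖f‖ • (‖f‖⁻¹ • f)) (A N) := by rw [← hfw]
          _ ≤ |‖f‖| * infDist (‖f‖⁻¹ • f) (A N) := infDist_smul_le (hA.2.2.1 N) _ _
          _ ≤ ‖f‖ * δ := by
              rw [abs_of_nonneg hnf.le]
              exact mul_le_mul_of_nonneg_left (hNS _ hwS) hnf.le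
          _ = δ * ‖f‖ := mul_comm _ _
      obtain ⟨N, hN1, hNf⟩ := hNet
      set M := max n₀ N with hMdef
      refine ⟨K M, le_trans (le_trans hn₀ (le_max_left _ _)) (hA.2.1 M).1, fun x => ?_⟩
      rcases eq_or_ne x 0 with rfl | hx0
      · have h0 : (0:X) ∈ A (K M) :=
          AS_zero_mem hA (le_trans (le_trans hn₀ (le_max_left _ _)) (hA.2.1 M).1)
        simpa using infDist_le_dist_of_mem (x := (0:X)) h0
      have hx : (0:ℝ) < ‖x‖ := norm_pos_iff.mpr hx0
      have h1 : infDist x (A n₀ + (F : Set X)) < 3/5 * ‖x‖ :=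
        lt_of_le_of_lt (hyp x) (by nlinarith)
      obtain ⟨p, hp, hdp⟩ := (infDist_lt_iff hBne).mp h1
      obtain ⟨a, ha, f, hfF, rfl⟩ := Set.mem_add.mp hp
      -- bound on ‖f‖
      have hna : -a ∈ A n₀ := hA.2.2.1 n₀ (-1) ⟨a, ha, by simp⟩
      have hfb : η * ‖f‖ ≤ 8/5 * ‖x‖ := by
        have h2 : η * ‖f‖ ≤ dist f (-a) := hlow f hfF _ hna
        have h3 : dist f (-a) = ‖a + f‖ := by
          rw [dist_eq_norm]; congr 1; abel
        have h4 : ‖a + f‖ ≤ ‖x‖ + dist x (a + f) := by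
          rw [dist_eq_norm]
          calc ‖a + f‖ = ‖x - (x - (a+f))‖ := by congr 1; abel
            _ ≤ ‖x‖ + ‖x - (a+f)‖ := norm_sub_le _ _
        rw [h3] at h2
        nlinarith
      have hfN : infDist f (A N) < 1/8 * ‖x‖ := by
        have h5 := hNf f hfF
        have h6 : η / 16 * ‖f‖ ≤ 1/10 * ‖x‖ := by nlinarith
        nlinarith
      obtain ⟨b, hb, hdb⟩ := (infDist_lt_iff (AS_nonempty hA hN1)).mp hfN
      have hab : a + b ∈ A (K M) :=
        (hA.2.1 M).2 (Set.add_mem_add (AS_mono hA (le_max_left _ _) ha)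
          (AS_mono hA (le_max_right _ _) hb))
      calc infDist x (A (K M)) ≤ dist x (a + b) := infDist_le_dist_of_mem hab
        _ ≤ dist x (a + f) + dist (a + f) (a + b) := dist_triangle _ _ _
        _ = dist x (a + f) + dist f b := by rw [dist_add_left]
        _ ≤ 3/4 * ‖x‖ := by linarith

end Aux

/-- If an approximation scheme `(A n)` in a Banach space `X` satisfies Shapiro's Theorem
and `F` is a finite dimensional subspace of `X`, then the approximation scheme
`(A n + F)` satisfies Shapiro's Theorem as well. -/
theorem stability_add_fin_dim
    {X : Type*} [NormedAddCommGroup X] [NormedSpace ℝ X] [CompleteSpace X]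
    (A : ℕ → Set X) (K : ℕ → ℕ) (hA : IsApproximationScheme A K)
    (hShap : ∀ ε : ℕ → ℝ, NullSeq ε →
      ∃ x : X, ¬ ∃ C : ℝ, ∀ n : ℕ, infDist x (A n) ≤ C * ε n)
    (F : Submodule ℝ X) (hF : FiniteDimensional ℝ F) :
    ∀ ε : ℕ → ℝ, NullSeq ε →
      ∃ x : X, ¬ ∃ C : ℝ, ∀ n : ℕ, infDist x (A n + (F : Set X)) ≤ C * ε n := by
  classical
  intro ε hε
  by_contra hcon
  push_neg at hcon
  -- basic facts about B n := A n + F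
  have hBsmul : ∀ (n : ℕ) (c : ℝ), c • (A n + (F : Set X)) ⊆ A n + (F : Set X) := by
    rintro n c _ ⟨p, hp, rfl⟩
    obtain ⟨a, ha, f, hf, rfl⟩ := Set.mem_add.mp hp
    show c • (a + f) ∈ A n + (F : Set X)
    rw [smul_add]
    exact Set.add_mem_add (hA.2.2.1 n c ⟨a, ha, rfl⟩) (F.smul_mem c hf)
  have hBadd : ∀ n, (A n + (F : Set X)) + (A n + (F : Set X)) ⊆ A (K n) + (F : Set X) := by
    rintro n _ ⟨p, hp, q, hq, rfl⟩
    obtain ⟨a₁, ha₁, f₁, hf₁, rfl⟩ := Set.mem_add.mp hp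
    obtain ⟨a₂, ha₂, f₂, hf₂, rfl⟩ := Set.mem_add.mp hq
    show (a₁ + f₁) + (a₂ + f₂) ∈ A (K n) + (F : Set X)
    have : a₁ + f₁ + (a₂ + f₂) = (a₁ + a₂) + (f₁ + f₂) := by abel
    rw [this]
    exact Set.add_mem_add ((hA.2.1 n).2 (Set.add_mem_add ha₁ ha₂)) (F.add_mem hf₁ hf₂)
  have hB0 : ∀ n, 1 ≤ n → (0:X) ∈ A n + (F : Set X) := fun n hn => by
    simpa using Set.add_mem_add (AS_zero_mem hA hn) (F.zero_mem)
  have hBne : ∀ n, 1 ≤ n → (A n + (F : Set X)).Nonempty := fun n hn => ⟨0, hB0 n hn⟩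
  -- Step 1 : Baire category gives a uniform bound at some level n₀
  have step1 : ∃ n₀, 1 ≤ n₀ ∧ ∀ x, infDist x (A n₀ + (F : Set X)) ≤ 2⁻¹ * ‖x‖ := by
    set S : ℕ → Set X := fun k => ⋂ n, {x | infDist x (A n + (F : Set X)) ≤ k * ε n}
      with hSdef
    have hScl : ∀ k, IsClosed (S k) :=
      fun k => isClosed_iInter fun n => isClosed_le (continuous_infDist_pt _) continuous_const
    have hSun : ⋃ k, S k = Set.univ := by
      refine Set.eq_univ_iff_forall.mpr fun x => Set.mem_iUnion.mpr ?_
      obtain ⟨C, hC⟩ := hcon x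
      refine ⟨⌈C⌉₊, Set.mem_iInter.mpr fun n => ?_⟩
      exact le_trans (hC n) (mul_le_mul_of_nonneg_right (Nat.le_ceil C) (hε.1 n))
    obtain ⟨k, hk⟩ := nonempty_interior_of_iUnion_of_closed hScl hSun
    obtain ⟨x₀, hx₀⟩ := hk
    rw [mem_interior_iff_mem_nhds, Metric.mem_nhds_iff] at hx₀
    obtain ⟨r, hr, hball⟩ := hx₀
    have hx₀S : x₀ ∈ S k := hball (mem_ball_self hr)
    -- small vectors are well approximated
    have hz : ∀ z : X, ‖z‖ < r → ∀ n, 1 ≤ n →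
        infDist z (A (K n) + (F : Set X)) ≤ 2 * k * ε n := by
      intro z hzr n hn
      have h1 : x₀ + z ∈ S k := by
        apply hball
        rw [mem_ball, dist_eq_norm]
        simpa using hzr
      refine le_of_forall_pos_le_add fun σ hσ => ?_
      have h2 : infDist (x₀ + z) (A n + (F : Set X)) < k * ε n + σ/2 := by
        have := Set.mem_iInter.mp h1 n
        simp only [Set.mem_setOf_eq] at this
        linarith
      have h3 : infDist x₀ (A n + (F : Set X)) < k * ε n + σ/2 := by
        have := Set.mem_iInter.mp hx₀S n
        simp only [Set.mem_setOf_eq] at this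
        linarith
      obtain ⟨p, hp, hdp⟩ := (infDist_lt_iff (hBne n hn)).mp h2
      obtain ⟨q, hq, hdq⟩ := (infDist_lt_iff (hBne n hn)).mp h3
      have hnq : -q ∈ A n + (F : Set X) := by
        have := hBsmul n (-1) ⟨q, hq, rfl⟩
        simpa using this
      have hmem : p + -q ∈ A (K n) + (F : Set X) := hBadd n (Set.add_mem_add hp hnq)
      have heq : z - (p + -q) = (x₀ + z - p) - (x₀ - q) := by abel
      calc infDist z (A (K n) + (F : Set X)) ≤ dist z (p + -q) :=
            infDist_le_dist_of_mem hmem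
        _ = ‖(x₀ + z - p) - (x₀ - q)‖ := by rw [dist_eq_norm, heq]
        _ ≤ ‖x₀ + z - p‖ + ‖x₀ - q‖ := norm_sub_le _ _
        _ ≤ 2 * k * ε n + σ := by
            rw [← dist_eq_norm, ← dist_eq_norm]
            linarith
    -- homogeneity
    have huni : ∀ n, 1 ≤ n → ∀ x : X,
        infDist x (A (K n) + (F : Set X)) ≤ 4 * k / r * ε n * ‖x‖ := by
      intro n hn x
      rcases eq_or_ne x 0 with rfl | hx0
      · have := hB0 (K n) (le_trans hn (hA.2.1 n).1)
        simpa using infDist_le_dist_of_mem (x := (0:X)) this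
      have hx : (0:ℝ) < ‖x‖ := norm_pos_iff.mpr hx0
      set z : X := (r / (2 * ‖x‖)) • x with hzdef
      have hzn : ‖z‖ = r / 2 := by
        rw [hzdef, norm_smul, Real.norm_eq_abs, abs_of_pos (by positivity)]
        field_simp
      have hzr : ‖z‖ < r := by rw [hzn]; linarith
      have h1 := hz z hzr n hn
      have hxz : x = (2 * ‖x‖ / r) • z := by
        rw [hzdef, smul_smul]
        rw [show 2 * ‖x‖ / r * (r / (2 * ‖x‖)) = 1 by field_simp]
        simp
      calc infDist x (A (K n) + (F : Set X))
          = infDist ((2 * ‖x‖ / r) • z) (A (K n) + (F : Set X)) := by rw [← hxz]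
        _ ≤ |2 * ‖x‖ / r| * infDist z (A (K n) + (F : Set X)) :=
            infDist_smul_le (hBsmul (K n)) _ _
        _ ≤ (2 * ‖x‖ / r) * (2 * k * ε n) := by
            rw [abs_of_pos (by positivity)]
            refine mul_le_mul_of_nonneg_left h1 (by positivity)
        _ = 4 * k / r * ε n * ‖x‖ := by field_simp; ring
    -- choose a good level
    have htend : Tendsto (fun n => 4 * (k:ℝ) / r * ε n) atTop (nhds 0) := by
      have := hε.2.2.const_mul (4 * (k:ℝ) / r)
      simpa using this
    have hev : ∀ᶠ n in atTop, 4 * (k:ℝ) / r * ε n < 2⁻¹ :=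
      htend.eventually_lt_const (by norm_num)
    obtain ⟨n, hn1, hnlt⟩ := ((eventually_ge_atTop 1).and hev).exists
    refine ⟨K n, le_trans hn1 (hA.2.1 n).1, fun x => ?_⟩
    calc infDist x (A (K n) + (F : Set X)) ≤ 4 * k / r * ε n * ‖x‖ := huni n hn1 x
      _ ≤ 2⁻¹ * ‖x‖ := mul_le_mul_of_nonneg_right hnlt.le (norm_nonneg x)
  obtain ⟨n₀, hn₀, h12⟩ := step1
  -- Step 2 : remove F
  obtain ⟨m, hm1, hm⟩ := step2 hA (Module.finrank ℝ F) F hF le_rfl n₀ hn₀ h12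
  -- Step 3 : geometric decay along iterates of K
  set Ns : ℕ → ℕ := fun j => K^[j] m with hNs
  have hNm : ∀ j, m ≤ Ns j := by
    intro j
    induction j with
    | zero => simp [hNs]
    | succ j ihj =>
      simp only [hNs] at ihj ⊢
      rw [Function.iterate_succ_apply']
      exact le_trans ihj (hA.2.1 _).1
  have hN1 : ∀ j, 1 ≤ Ns j := fun j => le_trans hm1 (hNm j)
  have hdecay : ∀ (j : ℕ) (x : X), infDist x (A (Ns j)) ≤ (4/5 : ℝ)^j * ‖x‖ := by
    intro j
    induction j with
    | zero =>
      intro x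
      simp only [pow_zero, one_mul, hNs, Function.iterate_zero_apply]
      exact le_trans (hm x) (by nlinarith [norm_nonneg x])
    | succ j ihj =>
      intro x
      refine le_of_forall_pos_le_add fun σ hσ => ?_
      have h1 : infDist x (A (Ns j)) < (4/5:ℝ)^j * ‖x‖ + σ/2 :=
        lt_of_le_of_lt (ihj x) (by linarith)
      obtain ⟨a, ha, hda⟩ := (infDist_lt_iff (AS_nonempty hA (hN1 j))).mp h1
      have h2 : infDist (x - a) (A m) < 3/4 * ‖x - a‖ + σ/8 :=
        lt_of_le_of_lt (hm (x - a)) (by linarith)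
      obtain ⟨b, hb, hdb⟩ := (infDist_lt_iff (AS_nonempty hA hm1)).mp h2
      have hab : a + b ∈ A (Ns (j+1)) := by
        have : Ns (j+1) = K (Ns j) := Function.iterate_succ_apply' K j m
        rw [this]
        exact (hA.2.1 (Ns j)).2 (Set.add_mem_add ha (AS_mono hA (hNm j) hb))
      have hda' : ‖x - a‖ < (4/5:ℝ)^j * ‖x‖ + σ/2 := by rwa [← dist_eq_norm]
      have hpow : (0:ℝ) ≤ (4/5:ℝ)^j := by positivity
      calc infDist x (A (Ns (j+1))) ≤ dist x (a + b) := infDist_le_dist_of_mem hab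
        _ = ‖(x - a) - b‖ := by rw [dist_eq_norm]; congr 1; abel
        _ = dist (x - a) b := (dist_eq_norm _ _).symm
        _ ≤ 3/4 * ‖x - a‖ + σ/8 := hdb.le
        _ ≤ (4/5:ℝ)^(j+1) * ‖x‖ + σ := by
            rw [pow_succ]
            nlinarith [norm_nonneg x]
  -- the new null sequence
  set J : ℕ → ℕ := fun n => Nat.findGreatest (fun j => Ns j ≤ n) n with hJ
  have hJP : ∀ n, J n ≠ 0 → Ns (J n) ≤ n := by
    intro n h0
    have h1 : ¬ (∀ ⦃j : ℕ⦄, 0 < j → j ≤ n → ¬ Ns j ≤ n) := by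
      intro h
      exact h0 (Nat.findGreatest_eq_zero_iff.mpr h)
    push_neg at h1
    obtain ⟨j, hj0, hjn, hjN⟩ := h1
    exact Nat.findGreatest_spec (P := fun j => Ns j ≤ n) hjn hjN
  have hJmono : Monotone J := by
    intro n n' hnn'
    rcases eq_or_ne (J n) 0 with h0 | h0
    · simp [h0]
    · exact Nat.le_findGreatest (le_trans (Nat.findGreatest_le n) hnn')
        (le_trans (hJP n h0) hnn')
  set ε' : ℕ → ℝ := fun n => (4/5:ℝ)^(J n) with hε'
  have hε'null : NullSeq ε' := by
    refine ⟨fun n => by positivity, ?_, ?_⟩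
    · intro a b hab
      exact pow_le_pow_of_le_one (by norm_num) (by norm_num) (hJmono hab)
    · have hJtop : Tendsto J atTop atTop := by
        refine tendsto_atTop.mpr fun j => ?_
        filter_upwards [eventually_ge_atTop (max j (Ns j))] with n hn
        exact Nat.le_findGreatest (le_trans (le_max_left _ _) hn)
          (le_trans (le_max_right _ _) hn)
      exact (tendsto_pow_atTop_nhds_zero_of_lt_one (by norm_num) (by norm_num)).comp hJtop
  obtain ⟨x₁, hx₁⟩ := hShap ε' hε'null
  refine hx₁ ⟨‖x₁‖, fun n => ?_⟩
  rcases eq_or_ne (J n) 0 with h0 | h0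
  · have : ε' n = 1 := by simp [hε', h0]
    rw [this, mul_one]
    exact infDist_le_norm hA x₁ n
  · have h1 := hJP n h0
    calc infDist x₁ (A n) ≤ infDist x₁ (A (Ns (J n))) :=
          infDist_le_infDist_of_subset (AS_mono hA h1) (AS_nonempty hA (hN1 _))
      _ ≤ (4/5:ℝ)^(J n) * ‖x₁‖ := hdecay _ _
      _ = ‖x₁‖ * ε' n := mul_comm _ _
end

section
/- Let X be a real Banach space and let (A_n) be a boundedly compact approximation scheme in X, i.e., for every n the set {a ∈ A_n : ‖a‖ ≤ 1} is relatively compact in X. Then every infinite dimensional closed linear subspace Y of X satisfies Shapiro's Theorem relative to (A_n): for every nonincreasing sequence of nonnegative reals ε_n → 0 there exists y ∈ Y such that there is no constant C with E(y, A_n) ≤ C ε_n for all n. -/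
open Metric Filter Pointwise

set_option synthInstance.maxHeartbeats 1000000
set_option maxHeartbeats 1000000

/-- Riesz-type lemma: if `M` is a nonempty cone whose unit part is relatively compact and
`Y` is an infinite-dimensional subspace, then there is a unit vector of `Y` at distance
at least `1/8` from `M`. -/
lemma exists_unit_far {X : Type*} [NormedAddCommGroup X] [NormedSpace ℝ X]
    (M : Set X) (hM : M.Nonempty) (hcone : ∀ c : ℝ, c • M ⊆ M)
    (hcpt : IsCompact (closure {a ∈ M | ‖a‖ ≤ 1}))
    (Y : Submodule ℝ X) (hY : ¬ FiniteDimensional ℝ Y) :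
    ∃ y ∈ Y, ‖y‖ = 1 ∧ (1/8 : ℝ) ≤ infDist y M := by
  by_contra hcon
  push_neg at hcon
  -- hcon : ∀ y ∈ Y, ‖y‖ = 1 → infDist y M < 1/8
  set Q : Set X := (2:ℝ) • closure {a ∈ M | ‖a‖ ≤ 1} with hQdef
  have hQ : IsCompact Q := hcpt.smul (2:ℝ)
  obtain ⟨t, htf, htsub⟩ := totallyBounded_iff.mp hQ.totallyBounded (1/8) (by norm_num)
  classical
  set g : X → X := fun x =>
    if h : ∃ y, y ∈ (Y : Set X) ∧ ‖y‖ = 1 ∧ dist y x < 1/4 then h.choose else 0 with hgdef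
  have hgY : ∀ x, g x ∈ Y := by
    intro x
    rw [hgdef]
    dsimp only
    split
    · next h => exact h.choose_spec.1
    · exact Y.zero_mem
  have key : ∀ y ∈ Y, ‖y‖ = 1 → ∃ x ∈ t, dist y (g x) < 1/2 := by
    intro y hy hy1
    obtain ⟨a, haM, hay⟩ := (infDist_lt_iff hM).mp (hcon y hy hy1)
    have hanorm : ‖a‖ ≤ 2 := by
      have h1 : ‖a - y‖ < 1/8 := by rwa [dist_eq_norm, norm_sub_rev] at hay
      have h2 : ‖a‖ ≤ ‖a - y‖ + ‖y‖ := by simpa using norm_add_le (a - y) y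
      rw [hy1] at h2
      linarith
    have haQ : a ∈ Q := by
      have hmem : (2:ℝ)⁻¹ • a ∈ {b ∈ M | ‖b‖ ≤ 1} := by
        refine ⟨hcone 2⁻¹ (Set.smul_mem_smul_set haM), ?_⟩
        rw [norm_smul]
        simp only [norm_inv, Real.norm_ofNat]
        linarith [hanorm]
      have : (2:ℝ) • ((2:ℝ)⁻¹ • a) ∈ Q :=
        Set.smul_mem_smul_set (subset_closure hmem)
      rwa [smul_inv_smul₀ (by norm_num : (2:ℝ) ≠ 0)] at this
    obtain ⟨x, hxt, hax⟩ := Set.mem_iUnion₂.mp (htsub haQ)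
    have hax' : dist a x < 1/8 := mem_ball.mp hax
    have hyx : dist y x < 1/4 := by
      calc dist y x ≤ dist y a + dist a x := dist_triangle y a x
        _ < 1/8 + 1/8 := by linarith
        _ = 1/4 := by norm_num
    have hex : ∃ y', y' ∈ (Y : Set X) ∧ ‖y'‖ = 1 ∧ dist y' x < 1/4 := ⟨y, hy, hy1, hyx⟩
    refine ⟨x, hxt, ?_⟩
    have hgx : g x = hex.choose := by rw [hgdef]; exact dif_pos hex
    have hspec := hex.choose_spec
    calc dist y (g x) ≤ dist y x + dist x (g x) := dist_triangle y x (g x)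
      _ < 1/4 + 1/4 := by
          have : dist x (g x) < 1/4 := by rw [hgx, dist_comm]; exact hspec.2.2
          linarith
      _ = 1/2 := by norm_num
  set F : Submodule ℝ X := Submodule.span ℝ (g '' t) with hFdef
  haveI : FiniteDimensional ℝ F := FiniteDimensional.span_of_finite ℝ (htf.image g)
  have hFY : F ≤ Y := Submodule.span_le.mpr (by
    rintro _ ⟨x, -, rfl⟩
    exact hgY x)
  have hF0 : (0:X) ∈ (F : Set X) := F.zero_mem
  have hFne : (F : Set X).Nonempty := ⟨0, hF0⟩
  have step : ∀ y ∈ Y, infDist y (F : Set X) ≤ 1/2 * ‖y‖ := by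
    intro y hy
    rcases eq_or_ne y 0 with rfl | hy0
    · simpa using infDist_le_dist_of_mem (x := (0:X)) hF0
    · set u := ‖y‖⁻¹ • y with hu
      have hnu : ‖y‖ ≠ 0 := norm_ne_zero_iff.mpr hy0
      have huY : u ∈ Y := Y.smul_mem _ hy
      have hu1 : ‖u‖ = 1 := by
        rw [hu, norm_smul, norm_inv, norm_norm, inv_mul_cancel₀ hnu]
      obtain ⟨x, hxt, hdu⟩ := key u huY hu1
      have hmemF : ‖y‖ • g x ∈ (F : Set X) :=
        F.smul_mem _ (Submodule.subset_span (Set.mem_image_of_mem g hxt))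
      have hyu : ‖y‖ • u = y := by
        rw [hu, smul_inv_smul₀ hnu]
      have hdu' : ‖u - g x‖ < 1/2 := by rwa [dist_eq_norm] at hdu
      calc infDist y (F : Set X) ≤ dist y (‖y‖ • g x) := infDist_le_dist_of_mem hmemF
        _ = ‖y - ‖y‖ • g x‖ := dist_eq_norm _ _
        _ = ‖‖y‖ • (u - g x)‖ := by rw [smul_sub, hyu]
        _ = ‖y‖ * ‖u - g x‖ := by rw [norm_smul, norm_norm]
        _ ≤ ‖y‖ * (1/2) := mul_le_mul_of_nonneg_left (le_of_lt hdu') (norm_nonneg y)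
        _ = 1/2 * ‖y‖ := by ring
  have iter : ∀ k : ℕ, ∀ y ∈ Y, infDist y (F : Set X) ≤ (1/2)^k * ‖y‖ := by
    intro k
    induction k with
    | zero => intro y hy; simpa using infDist_le_dist_of_mem hF0
    | succ k ih =>
      intro y hy
      apply le_of_forall_pos_le_add
      intro δ hδ
      have h1 : infDist y (F : Set X) < 1/2 * ‖y‖ + δ/2 :=
        lt_of_le_of_lt (step y hy) (by linarith)
      obtain ⟨f, hfF, hf⟩ := (infDist_lt_iff hFne).mp h1
      have hw : y - f ∈ Y := Y.sub_mem hy (hFY hfF)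
      have hpow : (0:ℝ) < (1/2)^k := by positivity
      have hpow1 : ((1:ℝ)/2)^k ≤ 1 := pow_le_one₀ (by norm_num) (by norm_num)
      have h2 : infDist (y - f) (F : Set X) < (1/2)^k * (1/2 * ‖y‖ + δ/2) + δ/2 := by
        have hle : infDist (y - f) (F : Set X) ≤ (1/2)^k * ‖y - f‖ := ih (y - f) hw
        have hnf : ‖y - f‖ < 1/2 * ‖y‖ + δ/2 := by rwa [dist_eq_norm] at hf
        have : (1/2:ℝ)^k * ‖y - f‖ < (1/2)^k * (1/2 * ‖y‖ + δ/2) :=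
          mul_lt_mul_of_pos_left hnf hpow
        calc infDist (y - f) (F : Set X) ≤ (1/2)^k * ‖y - f‖ := hle
          _ < (1/2)^k * (1/2 * ‖y‖ + δ/2) := this
          _ < (1/2)^k * (1/2 * ‖y‖ + δ/2) + δ/2 := by linarith
      obtain ⟨e, heF, he⟩ := (infDist_lt_iff hFne).mp h2
      apply le_of_lt
      have hfe : f + e ∈ (F : Set X) := F.add_mem hfF heF
      have hd : dist y (f + e) = dist (y - f) e := by
        rw [dist_eq_norm, dist_eq_norm]
        congr 1
        abel
      calc infDist y (F : Set X) ≤ dist y (f + e) := infDist_le_dist_of_mem hfe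
        _ = dist (y - f) e := hd
        _ < (1/2)^k * (1/2 * ‖y‖ + δ/2) + δ/2 := he
        _ ≤ (1/2)^(k+1) * ‖y‖ + δ := by
            have : (1/2:ℝ)^k * (δ/2) ≤ δ/2 := by nlinarith
            have hpk : (1/2:ℝ)^k * (1/2 * ‖y‖) = (1/2)^(k+1) * ‖y‖ := by ring
            nlinarith
  have hYF : ∀ y ∈ Y, y ∈ F := by
    intro y hy
    have htend : Tendsto (fun k : ℕ => (1/2:ℝ)^k * ‖y‖) atTop (nhds 0) := by
      have := tendsto_pow_atTop_nhds_zero_of_lt_one (by norm_num : (0:ℝ) ≤ 1/2)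
        (by norm_num : (1/2:ℝ) < 1)
      simpa using this.mul_const ‖y‖
    have hle0 : infDist y (F : Set X) ≤ 0 :=
      ge_of_tendsto' htend (fun k => iter k y hy)
    have h0 : infDist y (F : Set X) = 0 := le_antisymm hle0 infDist_nonneg
    have : y ∈ closure (F : Set X) := (mem_closure_iff_infDist_zero hFne).mpr h0
    rwa [F.closed_of_finiteDimensional.closure_eq] at this
  exact hY (Submodule.finiteDimensional_of_le (fun y hy => hYF y hy))

/-- If `(A n)` is a boundedly compact approximation scheme in a Banach space `X`, then
every infinite dimensional closed subspace `Y` of `X` satisfies Shapiro's Theorem relative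
to `(A n)`. -/
theorem boundedly_compact_shapiro
    {X : Type*} [NormedAddCommGroup X] [NormedSpace ℝ X] [CompleteSpace X]
    (A : ℕ → Set X) (K : ℕ → ℕ) (hA : IsApproximationScheme A K)
    (hcpt : ∀ n : ℕ, IsCompact (closure {a ∈ A n | ‖a‖ ≤ 1}))
    (Y : Submodule ℝ X) (hYc : IsClosed (Y : Set X)) (hY : ¬ FiniteDimensional ℝ Y) :
    ∀ ε : ℕ → ℝ, NullSeq ε →
      ∃ y ∈ Y, ¬ ∃ C : ℝ, ∀ n : ℕ, infDist y (A n) ≤ C * ε n := by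
  obtain ⟨hchain, hK, hcone, -⟩ := hA
  have hmono : Monotone A := monotone_nat_of_le_succ fun n => (hchain n).subset
  obtain ⟨x1, hx1, -⟩ := Set.exists_of_ssubset (hchain 0)
  have hAne : ∀ n, 1 ≤ n → (A n).Nonempty := fun n hn => ⟨x1, hmono hn hx1⟩
  rintro ε ⟨hε0, -, hεlim⟩
  by_contra hcon
  push_neg at hcon
  -- hcon : ∀ y ∈ Y, ∃ C, ∀ n, infDist y (A n) ≤ C * ε n
  haveI : CompleteSpace Y := hYc.completeSpace_coe
  haveI : Nonempty Y := ⟨0⟩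
  set S : ℕ → Set Y := fun C => {y : Y | ∀ n, infDist (y : X) (A n) ≤ (C : ℝ) * ε n} with hS
  have hScl : ∀ C, IsClosed (S C) := by
    intro C
    have : S C = ⋂ n, {y : Y | infDist (y : X) (A n) ≤ (C : ℝ) * ε n} := by
      ext y; simp [hS, Set.mem_iInter]
    rw [this]
    exact isClosed_iInter fun n =>
      isClosed_le ((continuous_infDist_pt (A n)).comp continuous_subtype_val) continuous_const
  have hScov : ⋃ C, S C = Set.univ := by
    ext y
    simp only [Set.mem_iUnion, Set.mem_univ, iff_true]
    obtain ⟨C, hC⟩ := hcon (y : X) y.2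
    refine ⟨⌈max C 0⌉₊, fun n => (hC n).trans ?_⟩
    have hCle : C ≤ ((⌈max C 0⌉₊ : ℕ) : ℝ) := le_trans (le_max_left _ _) (Nat.le_ceil _)
    exact mul_le_mul_of_nonneg_right hCle (hε0 n)
  obtain ⟨C, hCint⟩ := nonempty_interior_of_iUnion_of_closed hScl hScov
  obtain ⟨y₀, hy₀⟩ := hCint
  obtain ⟨ρ, hρ, hball⟩ := Metric.isOpen_iff.mp isOpen_interior y₀ hy₀
  have hball' : ∀ z : Y, dist z y₀ < ρ → z ∈ S C :=
    fun z hz => interior_subset (hball hz)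
  have hy₀S : y₀ ∈ S C := hball' y₀ (by simpa using hρ)
  -- key quantitative bound
  have key : ∀ m : ℕ, 1 ≤ m → ∀ z, z ∈ Y → ‖z‖ = 1 →
      infDist z (A (K m)) ≤ 4 * (C : ℝ) / ρ * ε m := by
    intro m hm z hzY hz1
    have hKm : (1:ℕ) ≤ K m := le_trans hm (hK m).1
    have hAm : (A m).Nonempty := hAne m hm
    have hAKm : (A (K m)).Nonempty := hAne _ hKm
    set zY : Y := ⟨z, hzY⟩ with hzYdef
    have hznorm : ‖zY‖ = 1 := hz1
    have hy₁S : y₀ + (ρ/2) • zY ∈ S C := by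
      apply hball'
      have h1 : dist (y₀ + (ρ/2) • zY) y₀ = ‖(ρ/2) • zY‖ := by
        rw [dist_eq_norm]; congr 1; abel
      rw [h1, norm_smul, hznorm]
      simp only [Real.norm_eq_abs, mul_one]
      rw [abs_of_pos (by linarith)]
      linarith
    have hcoe : ((y₀ + (ρ/2) • zY : Y) : X) = (y₀ : X) + (ρ/2) • z := by
      push_cast [hzYdef]
      rfl
    have h2 : infDist ((ρ/2) • z) (A (K m)) ≤ 2 * ((C:ℝ) * ε m) := by
      apply le_of_forall_pos_le_add
      intro δ hδ
      have h1' : infDist ((y₀ + (ρ/2) • zY : Y) : X) (A m) < (C:ℝ) * ε m + δ/2 :=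
        lt_of_le_of_lt (hy₁S m) (by linarith)
      obtain ⟨a, haA, ha⟩ := (infDist_lt_iff hAm).mp h1'
      have h0' : infDist ((y₀ : Y) : X) (A m) < (C:ℝ) * ε m + δ/2 :=
        lt_of_le_of_lt (hy₀S m) (by linarith)
      obtain ⟨b, hbA, hb⟩ := (infDist_lt_iff hAm).mp h0'
      have hbneg : (-1:ℝ) • b ∈ A m := hcone m (-1) (Set.smul_mem_smul_set hbA)
      have hab : a - b ∈ A (K m) := by
        have := (hK m).2 (Set.add_mem_add haA hbneg)
        simpa [sub_eq_add_neg] using this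
      refine le_trans (infDist_le_dist_of_mem hab) ?_
      rw [hcoe] at ha
      apply le_of_lt
      have heq : (ρ/2) • z - (a - b) = (((y₀:X) + (ρ/2) • z) - a) - ((y₀:X) - b) := by abel
      calc dist ((ρ/2) • z) (a - b) = ‖(ρ/2) • z - (a - b)‖ := dist_eq_norm _ _
        _ = ‖(((y₀:X) + (ρ/2) • z) - a) - ((y₀:X) - b)‖ := by rw [heq]
        _ ≤ ‖((y₀:X) + (ρ/2) • z) - a‖ + ‖(y₀:X) - b‖ := norm_sub_le _ _
        _ < ((C:ℝ) * ε m + δ/2) + ((C:ℝ) * ε m + δ/2) := by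
            rw [dist_eq_norm] at ha hb
            exact add_lt_add ha hb
        _ = 2 * ((C:ℝ) * ε m) + δ := by ring
    -- rescale
    apply le_of_forall_pos_le_add
    intro δ hδ
    have hρ2 : (0:ℝ) < ρ/2 := by linarith
    have h3 : infDist ((ρ/2) • z) (A (K m)) < 2 * ((C:ℝ) * ε m) + (ρ/2) * δ :=
      lt_of_le_of_lt h2 (by nlinarith)
    obtain ⟨a, haA, ha⟩ := (infDist_lt_iff hAKm).mp h3
    have ha' : (ρ/2)⁻¹ • a ∈ A (K m) := hcone _ _ (Set.smul_mem_smul_set haA)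
    refine le_trans (infDist_le_dist_of_mem ha') ?_
    have hdz : dist z ((ρ/2)⁻¹ • a) = (ρ/2)⁻¹ * dist ((ρ/2) • z) a := by
      rw [dist_eq_norm, dist_eq_norm, ← norm_smul_of_nonneg (le_of_lt (inv_pos.mpr hρ2)),
        smul_sub, inv_smul_smul₀ (ne_of_gt hρ2)]
    rw [hdz]
    have hbound : (ρ/2)⁻¹ * dist ((ρ/2) • z) a < (ρ/2)⁻¹ * (2 * ((C:ℝ) * ε m) + (ρ/2) * δ) :=
      mul_lt_mul_of_pos_left ha (inv_pos.mpr hρ2)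
    have hfin : (ρ/2)⁻¹ * (2 * ((C:ℝ) * ε m) + (ρ/2) * δ) = 4 * (C:ℝ) / ρ * ε m + δ := by
      field_simp
      ring
    linarith [hfin ▸ hbound]
  -- choose n with small tail, contradict the Riesz lemma
  have hlim : Tendsto (fun n => 4 * (C:ℝ) / ρ * ε (n+1)) atTop (nhds 0) := by
    have h1 : Tendsto (fun n => ε (n+1)) atTop (nhds 0) :=
      hεlim.comp (tendsto_add_atTop_nat 1)
    simpa using h1.const_mul (4 * (C:ℝ) / ρ)
  obtain ⟨n, hn⟩ := (hlim.eventually (gt_mem_nhds (show (0:ℝ) < 1/8 by norm_num))).exists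
  obtain ⟨z, hzY, hz1, hz8⟩ := exists_unit_far (A (K (n+1)))
    (hAne _ (le_trans (by omega) (hK (n+1)).1)) (hcone _) (hcpt _) Y hY
  have := le_trans hz8 (key (n+1) (by omega) z hzY hz1)
  exact absurd this (not_le.mpr hn)
end

section
/- Let X be a real Banach space, let (A_n) be an approximation scheme in X, and let Y be a normed space that is a linear subspace of X such that the inclusion map Y ↪ X is compact (the unit ball of Y is relatively compact in X). Then Y is not far from (A_n): there is no c > 0 with E(S(Y), A_n) ≥ c for all n, i.e., inf_n E(S(Y), A_n) = 0. Consequently, Y fails Shapiro's Theorem relative to (A_n). -/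
open Metric Filter Pointwise

/-- If the inclusion of a normed space `Y` into a Banach space `X` is compact (the image
of the unit ball of `Y` is relatively compact in `X`), then `Y` is not far from any
approximation scheme `(A n)` in `X`, and consequently `Y` fails Shapiro's Theorem
relative to `(A n)`. -/
theorem compact_embedding_not_far
    {X : Type*} [NormedAddCommGroup X] [NormedSpace ℝ X] [CompleteSpace X]
    {Y : Type*} [NormedAddCommGroup Y] [NormedSpace ℝ Y]
    (A : ℕ → Set X) (K : ℕ → ℕ) (hA : IsApproximationScheme A K)
    (J : Y →L[ℝ] X) (hJ : Function.Injective J)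
    (hcpt : IsCompact (closure (J '' Metric.closedBall 0 1))) :
    (¬ ∃ c > (0 : ℝ), ∀ n : ℕ, ∀ δ > (0 : ℝ),
        ∃ y : Y, ‖y‖ = 1 ∧ infDist (J y) (A n) > c - δ) ∧
    (∃ ε : ℕ → ℝ, NullSeq ε ∧ ∃ C : Y → ℝ, (∀ y : Y, 0 ≤ C y) ∧
        ∀ (y : Y) (n : ℕ), infDist (J y) (A n) ≤ C y * ε n) := by
  obtain ⟨hchain, hK, hsmul, hdense⟩ := hA
  set B : Set X := closure (J '' Metric.closedBall 0 1) with hBdef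
  have hmono : Monotone A := monotone_nat_of_le_succ fun n => (hchain n).1.subset
  -- `A n` is invariant under nonzero scaling
  have hsmul_eq : ∀ (n : ℕ) (c : ℝ), c ≠ 0 → c • A n = A n := by
    intro n c hc
    refine Set.Subset.antisymm (hsmul n c) ?_
    intro a ha
    have h1 : c⁻¹ • a ∈ A n := hsmul n c⁻¹ ⟨a, ha, rfl⟩
    exact ⟨c⁻¹ • a, h1, by simp [smul_smul, mul_inv_cancel₀ hc]⟩
  -- `A n` is nonempty for `n ≥ 1`
  have hne : ∀ n, 1 ≤ n → (A n).Nonempty := by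
    intro n hn
    obtain ⟨x, hx, -⟩ := Set.exists_of_ssubset (hchain 0)
    exact ⟨x, hmono hn hx⟩
  -- membership of `0` in `B`
  have h0B : (0 : X) ∈ B :=
    subset_closure ⟨0, Metric.mem_closedBall_self zero_le_one, map_zero J⟩
  have hBne : B.Nonempty := ⟨0, h0B⟩
  -- pointwise convergence `infDist x (A n) → 0`, with `N ≥ 1`
  have hpt : ∀ x : X, ∀ ε : ℝ, 0 < ε → ∃ N, 1 ≤ N ∧ ∀ n, N ≤ n → infDist x (A n) < ε := by
    intro x ε hε
    obtain ⟨a, ha, hd⟩ := hdense.exists_dist_lt x hε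
    obtain ⟨N, haN⟩ := Set.mem_iUnion.1 ha
    refine ⟨max N 1, le_max_right _ _, fun n hn => ?_⟩
    have : a ∈ A n := hmono (le_trans (le_max_left N 1) hn) haN
    exact lt_of_le_of_lt (Metric.infDist_le_dist_of_mem this) hd
  -- the sup of `infDist · (A n)` over `B`
  set D : ℕ → ℝ := fun n => sSup ((fun x => infDist x (A n)) '' B) with hDdef
  have hbdd : ∀ n, BddAbove ((fun x => infDist x (A n)) '' B) := fun n =>
    (hcpt.image (Metric.continuous_infDist_pt (A n))).bddAbove
  have hle_D : ∀ n, ∀ x ∈ B, infDist x (A n) ≤ D n := fun n x hx =>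
    le_csSup (hbdd n) (Set.mem_image_of_mem _ hx)
  have hD_nonneg : ∀ n, 0 ≤ D n := fun n =>
    le_trans Metric.infDist_nonneg (hle_D n 0 h0B)
  -- D is antitone from index 1 on
  have hD_anti : ∀ m n, 1 ≤ m → m ≤ n → D n ≤ D m := by
    intro m n hm hmn
    refine csSup_le (hBne.image _) ?_
    rintro r ⟨x, hx, rfl⟩
    exact le_trans (Metric.infDist_le_infDist_of_subset (hmono hmn) (hne m hm)) (hle_D m x hx)
  -- uniform convergence on the compact set `B`
  have huniform : ∀ ε : ℝ, 0 < ε → ∃ N, ∀ n, N ≤ n → ∀ x ∈ B, infDist x (A n) < ε := by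
    intro ε hε
    have hε2 : 0 < ε / 2 := half_pos hε
    choose N hN1 hN using fun x : X => hpt x (ε / 2) hε2
    obtain ⟨t, htB, hcover⟩ := hcpt.elim_nhds_subcover (fun x => Metric.ball x (ε / 2))
      (fun x _ => Metric.ball_mem_nhds x hε2)
    refine ⟨t.sup N, fun n hn x hx => ?_⟩
    obtain ⟨z, hzt, hz⟩ := Set.mem_iUnion₂.1 (hcover hx)
    have hzn : N z ≤ n := le_trans (Finset.le_sup hzt) hn
    have h1 : infDist x (A n) ≤ infDist x (A (N z)) :=
      Metric.infDist_le_infDist_of_subset (hmono hzn)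
        (hne (N z) (hN1 z))
    have h2 : infDist x (A (N z)) ≤ infDist z (A (N z)) + dist x z :=
      Metric.infDist_le_infDist_add_dist
    have h3 : infDist z (A (N z)) < ε / 2 := hN z (N z) le_rfl
    have h4 : dist x z < ε / 2 := Metric.mem_ball.1 hz
    linarith
  have hD_tendsto : Tendsto D atTop (nhds 0) := by
    rw [Metric.tendsto_atTop]
    intro ε hε
    obtain ⟨N, hN⟩ := huniform (ε / 2) (half_pos hε)
    refine ⟨N, fun n hn => ?_⟩
    have : D n ≤ ε / 2 := csSup_le (hBne.image _)
      (by rintro r ⟨x, hx, rfl⟩; exact (hN n hn x hx).le)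
    rw [Real.dist_eq, sub_zero, abs_of_nonneg (hD_nonneg n)]
    linarith
  -- the error sequence: fix up index 0 for monotonicity
  set ε : ℕ → ℝ := fun n => if n = 0 then max (D 0) (D 1) else D n with hεdef
  have hεD : ∀ n, D n ≤ ε n := by
    intro n
    by_cases h : n = 0
    · subst h; simp [hεdef]
    · simp [hεdef, h]
  have hε_nonneg : ∀ n, 0 ≤ ε n := fun n => le_trans (hD_nonneg n) (hεD n)
  have hε_anti : Antitone ε := by
    refine antitone_nat_of_succ_le fun n => ?_
    by_cases h : n = 0
    · subst h
      simp only [hεdef, if_pos rfl, if_neg one_ne_zero]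
      exact le_max_right _ _
    · have h1 : 1 ≤ n := Nat.one_le_iff_ne_zero.2 h
      simp only [hεdef, if_neg (Nat.succ_ne_zero n), if_neg h]
      exact hD_anti n (n + 1) h1 (Nat.le_succ n)
  have hε_tendsto : Tendsto ε atTop (nhds 0) := by
    refine hD_tendsto.congr' ?_
    filter_upwards [eventually_ge_atTop 1] with n hn
    simp [hεdef, Nat.one_le_iff_ne_zero.1 hn]
  -- the main estimate
  have hmain : ∀ (y : Y) (n : ℕ), infDist (J y) (A n) ≤ ‖y‖ * ε n := by
    intro y n
    rcases eq_or_ne y 0 with rfl | hy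
    · rw [map_zero, norm_zero, zero_mul]
      rcases (A n).eq_empty_or_nonempty with h | ⟨a, ha⟩
      · rw [h, Metric.infDist_empty]
      · have h0 : (0 : X) ∈ A n := by
          have := hsmul n 0 ⟨a, ha, rfl⟩
          simpa using this
        exact le_trans (Metric.infDist_le_dist_of_mem h0) (by simp)
    · have hc : (0 : ℝ) < ‖y‖ := norm_pos_iff.2 hy
      set z : X := J ((‖y‖)⁻¹ • y) with hzdef
      have hzB : z ∈ B := by
        refine subset_closure ⟨(‖y‖)⁻¹ • y, ?_, rfl⟩
        rw [Metric.mem_closedBall, dist_zero_right, norm_smul, norm_inv, norm_norm,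
          inv_mul_cancel₀ hc.ne']
      have hJy : J y = ‖y‖ • z := by
        rw [hzdef, map_smul, smul_smul, mul_inv_cancel₀ hc.ne', one_smul]
      calc infDist (J y) (A n) = infDist (‖y‖ • z) (‖y‖ • A n) := by
            rw [hJy, hsmul_eq n ‖y‖ hc.ne']
        _ = ‖(‖y‖)‖ * infDist z (A n) := infDist_smul₀ hc.ne' _ _
        _ = ‖y‖ * infDist z (A n) := by rw [norm_norm]
        _ ≤ ‖y‖ * ε n := by
            exact mul_le_mul_of_nonneg_left (le_trans (hle_D n z hzB) (hεD n)) hc.le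
  refine ⟨?_, ε, ⟨hε_nonneg, hε_anti, hε_tendsto⟩, fun y => ‖y‖, fun y => norm_nonneg y, hmain⟩
  rintro ⟨c, hc, h⟩
  obtain ⟨n, hn⟩ := (hε_tendsto.eventually (gt_mem_nhds (half_pos hc))).exists
  obtain ⟨y, hy1, hy2⟩ := h n (c / 2) (half_pos hc)
  have : infDist (J y) (A n) ≤ ε n := by
    have := hmain y n; rwa [hy1, one_mul] at this
  linarith
end

section
/- Let X be a real Banach space with a Schauder basis (e_i)_{i ∈ ℕ} that is 1-unconditional, i.e., ‖Σ_i a_i b_i e_i‖ ≤ (sup_i |b_i|) ‖Σ_i a_i e_i‖ for all finite scalar sequences (a_i) and (b_i). For n ∈ ℕ let Σ_n denote the set of all x ∈ X that are linear combinations of at most n of the basis vectors e_i. Then every closed infinite dimensional linear subspace Y of X is 1-far from the approximation scheme (Σ_n): E(S(Y), Σ_n) ≥ 1 for every n; equivalently, for every n and every c > 1 there exists y ∈ Y with ‖y‖ < c such that ‖y − s‖ > 1/c for every s ∈ Σ_n. -/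
open Filter

/-- Core combinatorial lemma: for a family of "disjoint block" vectors whose partial
sums are monotone under set inclusion, there is a finite family `F` such that deleting
any `n` blocks keeps at least a `(1-δ)` fraction of the norm. -/
lemma exists_good_family {X : Type*} [NormedAddCommGroup X] (x : ℕ → X)
    (hlb : ∀ j, (1:ℝ)/2 ≤ ‖x j‖) (hub : ∀ j, ‖x j‖ ≤ 2)
    (hmono : ∀ (G F : Finset ℕ), G ⊆ F → ‖∑ j ∈ G, x j‖ ≤ ‖∑ j ∈ F, x j‖)
    (n : ℕ) {δ : ℝ} (hδ : 0 < δ) (hδ1 : δ ≤ 1) :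
    ∃ F : Finset ℕ, 1/2 ≤ ‖∑ j ∈ F, x j‖ ∧
      ∀ G ⊆ F, (F \ G).card ≤ n → (1-δ) * ‖∑ j ∈ F, x j‖ ≤ ‖∑ j ∈ G, x j‖ := by
  classical
  -- the sets of achievable norms with blocks indexed in `[m, ∞)`
  set S : ℕ → Set ℝ := fun m => (fun F : Finset ℕ => ‖∑ j ∈ F, x j‖) ''
      {F : Finset ℕ | ∀ i ∈ F, m ≤ i} with hS
  have hSne : ∀ m, (S m).Nonempty := by
    intro m; exact ⟨‖∑ j ∈ ({m} : Finset ℕ), x j‖, ⟨{m}, by simp, rfl⟩⟩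
  have hSmem : ∀ m, ‖x m‖ ∈ S m := by
    intro m; refine ⟨{m}, by simp, by simp⟩
  -- helper: get 1/2 ≤ ‖∑ F‖ from F nonempty
  have hhalf : ∀ F : Finset ℕ, F.Nonempty → 1/2 ≤ ‖∑ j ∈ F, x j‖ := by
    rintro F ⟨j, hj⟩
    calc (1:ℝ)/2 ≤ ‖x j‖ := hlb j
    _ = ‖∑ k ∈ ({j} : Finset ℕ), x k‖ := by simp
    _ ≤ ‖∑ k ∈ F, x k‖ := hmono _ _ (Finset.singleton_subset_iff.2 hj)
  by_cases hbdd : BddAbove (S 0)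
  · -- bounded case
    have hbddm : ∀ m, BddAbove (S m) := by
      intro m
      refine hbdd.mono ?_
      rintro r ⟨F, hF, rfl⟩; exact ⟨F, fun i _ => Nat.zero_le _, rfl⟩
    set L : ℕ → ℝ := fun m => sSup (S m) with hLdef
    have hLlb : ∀ m, (1:ℝ)/2 ≤ L m := fun m =>
      le_trans (hlb m) (le_csSup (hbddm m) (hSmem m))
    set L' : ℝ := sInf (Set.range L) with hL'
    have hL'lb : (1:ℝ)/2 ≤ L' := le_csInf (Set.range_nonempty L)
      (by rintro r ⟨m, rfl⟩; exact hLlb m)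
    have hL'le : ∀ m, L' ≤ L m := fun m =>
      csInf_le ⟨1/2, by rintro r ⟨k, rfl⟩; exact hLlb k⟩ ⟨m, rfl⟩
    set γ : ℝ := δ/8 with hγ
    have hγpos : 0 < γ := by positivity
    -- a starting point m₀ where L m₀ < L' + γ
    obtain ⟨r₀, ⟨m₀, rfl⟩, hm₀⟩ := exists_lt_of_csInf_lt (Set.range_nonempty L)
      (show L' < L' + γ by linarith)
    -- pick, beyond any m, a family with norm > L' - γ
    have hpick : ∀ m, ∃ F : Finset ℕ, (∀ i ∈ F, m ≤ i) ∧ L' - γ < ‖∑ j ∈ F, x j‖ := by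
      intro m
      obtain ⟨r, ⟨F, hF, rfl⟩, hr⟩ := exists_lt_of_lt_csSup (hSne m)
        (show L' - γ < L m by have := hL'le m; linarith)
      exact ⟨F, hF, hr⟩
    -- main induction
    have claim : ∀ k : ℕ, ∃ (m : ℕ) (F : Finset ℕ), m₀ ≤ m ∧
        (∀ i ∈ F, m₀ ≤ i ∧ i < m) ∧
        ∀ G ⊆ F, (F \ G).card < k → L' - γ < ‖∑ j ∈ G, x j‖ := by
      intro k
      induction k with
      | zero => exact ⟨m₀, ∅, le_rfl, by simp, fun G hG h => absurd h (by simp)⟩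
      | succ k ih =>
        obtain ⟨m, F, hm, hF, hind⟩ := ih
        obtain ⟨F', hF', hF'norm⟩ := hpick m
        refine ⟨max m (F'.sup id + 1), F ∪ F', le_trans hm (le_max_left _ _), ?_, ?_⟩
        · intro i hi
          rcases Finset.mem_union.1 hi with hi | hi
          · exact ⟨(hF i hi).1, lt_of_lt_of_le (hF i hi).2 (le_max_left _ _)⟩
          · refine ⟨le_trans hm (hF' i hi), ?_⟩
            have : i ≤ F'.sup id := Finset.le_sup (f := id) hi
            exact lt_of_lt_of_le (Nat.lt_succ_of_le this) (le_max_right _ _)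
        · intro G hG hcard
          by_cases hsub : F' ⊆ G
          · exact lt_of_lt_of_le hF'norm (hmono _ _ hsub)
          · obtain ⟨b, hbF', hbG⟩ := Finset.not_subset.1 hsub
            have hbm : m ≤ b := hF' b hbF'
            have hbF : b ∉ F := fun hbF => absurd hbm (not_le.2 (hF b hbF).2)
            have hsub2 : F \ (G ∩ F) ⊆ ((F ∪ F') \ G).erase b := by
              intro i hi
              rcases Finset.mem_sdiff.1 hi with ⟨hiF, hiG⟩
              have hiG' : i ∉ G := fun h => hiG (Finset.mem_inter.2 ⟨h, hiF⟩)
              refine Finset.mem_erase.2 ⟨?_, Finset.mem_sdiff.2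
                ⟨Finset.mem_union.2 (Or.inl hiF), hiG'⟩⟩
              rintro rfl; exact hbF hiF
            have hb2 : b ∈ (F ∪ F') \ G :=
              Finset.mem_sdiff.2 ⟨Finset.mem_union.2 (Or.inr hbF'), hbG⟩
            have hcard2 : (F \ (G ∩ F)).card < k := by
              have := Finset.card_le_card hsub2
              rw [Finset.card_erase_of_mem hb2] at this
              have hpos : 0 < ((F ∪ F') \ G).card := Finset.card_pos.2 ⟨b, hb2⟩
              omega
            have h1 := hind (G ∩ F) Finset.inter_subset_right hcard2
            exact lt_of_lt_of_le h1 (hmono _ _ Finset.inter_subset_left)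
    obtain ⟨m, F, hm, hF, hprop⟩ := claim (n+1)
    have hFub : ‖∑ j ∈ F, x j‖ < L' + γ := by
      have hmem : ‖∑ j ∈ F, x j‖ ∈ S m₀ := ⟨F, fun i hi => (hF i hi).1, rfl⟩
      exact lt_of_le_of_lt (le_csSup (hbddm m₀) hmem) hm₀
    have hFne : F.Nonempty := by
      rcases Finset.eq_empty_or_nonempty F with rfl | h
      · exfalso
        have := hprop ∅ (Finset.Subset.refl _) (by simp)
        simp at this
        linarith
      · exact h
    refine ⟨F, hhalf F hFne, ?_⟩
    intro G hG hcard
    have h1 : L' - γ < ‖∑ j ∈ G, x j‖ := hprop G hG (Nat.lt_succ_of_le hcard)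
    have h2 : (1-δ) * ‖∑ j ∈ F, x j‖ ≤ (1-δ) * (L' + γ) := by
      apply mul_le_mul_of_nonneg_left (le_of_lt hFub); linarith
    nlinarith [hL'lb]
  · -- unbounded case
    obtain ⟨r, ⟨F, hF0, rfl⟩, hr⟩ :=
      not_bddAbove_iff.1 hbdd (2*(n+1)/δ)
    have hK : (0:ℝ) < 2*(n+1)/δ := by positivity
    have hFne : F.Nonempty := by
      rcases Finset.eq_empty_or_nonempty F with rfl | h
      · simp at hr; linarith
      · exact h
    refine ⟨F, hhalf F hFne, ?_⟩
    intro G hG hcard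
    have hsplit : ∑ j ∈ F \ G, x j + ∑ j ∈ G, x j = ∑ j ∈ F, x j :=
      Finset.sum_sdiff hG
    have h1 : ‖∑ j ∈ F, x j‖ ≤ ‖∑ j ∈ F \ G, x j‖ + ‖∑ j ∈ G, x j‖ := by
      rw [← hsplit]; exact norm_add_le _ _
    have h2 : ‖∑ j ∈ F \ G, x j‖ ≤ 2 * n := by
      calc ‖∑ j ∈ F \ G, x j‖ ≤ ∑ j ∈ F \ G, ‖x j‖ := norm_sum_le _ _
      _ ≤ ∑ j ∈ F \ G, 2 := Finset.sum_le_sum (fun j _ => hub j)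
      _ = 2 * (F \ G).card := by rw [Finset.sum_const]; push_cast; ring
      _ ≤ 2 * n := by
          have : ((F \ G).card : ℝ) ≤ n := by exact_mod_cast hcard
          linarith
    have h3 : 2*(n+1)/δ < ‖∑ j ∈ F, x j‖ := hr
    have h4 : 2 * (n:ℝ) ≤ δ * ‖∑ j ∈ F, x j‖ := by
      rw [div_lt_iff₀ hδ] at h3
      nlinarith
    nlinarith

/-- With a `1`-unconditional-type monotonicity, the norm of a sub-block of a finitely
supported vector is at most the norm of the vector minus any vector supported on a
set disjoint from that sub-block. -/
lemma norm_restrict_sub_le {X : Type*} [NormedAddCommGroup X] [NormedSpace ℝ X]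
    (e : ℕ → X)
    (hmono0 : ∀ (cc : ℕ → ℝ) (G F : Finset ℕ), G ⊆ F →
      ‖∑ i ∈ G, cc i • e i‖ ≤ ‖∑ i ∈ F, cc i • e i‖)
    (C l : ℕ → ℝ) (U A V : Finset ℕ) (hVU : V ⊆ U) (hVA : Disjoint V A) :
    ‖∑ i ∈ V, C i • e i‖ ≤ ‖(∑ i ∈ U, C i • e i) - ∑ i ∈ A, l i • e i‖ := by
  classical
  set D : ℕ → ℝ := fun i => (if i ∈ U then C i else 0) - (if i ∈ A then l i else 0)
    with hDdef
  have hrep : ∑ i ∈ U ∪ A, D i • e i = (∑ i ∈ U, C i • e i) - ∑ i ∈ A, l i • e i := by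
    have h1 : ∑ i ∈ U ∪ A, D i • e i
        = (∑ i ∈ U ∪ A, (if i ∈ U then C i • e i else 0))
          - ∑ i ∈ U ∪ A, (if i ∈ A then l i • e i else 0) := by
      rw [← Finset.sum_sub_distrib]
      refine Finset.sum_congr rfl fun i _ => ?_
      rw [hDdef]
      by_cases hh1 : i ∈ U <;> by_cases hh2 : i ∈ A <;> simp [hh1, hh2, sub_smul]
    rw [h1, Finset.sum_ite_mem, Finset.sum_ite_mem,
      Finset.inter_eq_right.2 Finset.subset_union_left,
      Finset.inter_eq_right.2 Finset.subset_union_right]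
  have hrepV : ∑ i ∈ V, D i • e i = ∑ i ∈ V, C i • e i := by
    refine Finset.sum_congr rfl fun i hi => ?_
    have hiU : i ∈ U := hVU hi
    have hiA : i ∉ A := Finset.disjoint_left.1 hVA hi
    rw [hDdef]
    simp [hiU, hiA]
  calc ‖∑ i ∈ V, C i • e i‖ = ‖∑ i ∈ V, D i • e i‖ := by rw [hrepV]
  _ ≤ ‖∑ i ∈ U ∪ A, D i • e i‖ := hmono0 D _ _ (hVU.trans Finset.subset_union_left)
  _ = ‖(∑ i ∈ U, C i • e i) - ∑ i ∈ A, l i • e i‖ := by rw [hrep]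


open Metric Filter Pointwise

set_option maxHeartbeats 2000000 in
/-- Let `X` be a Banach space with a Schauder basis `(e i)` which is `1`-unconditional.
For `n : ℕ`, let `Σₙ` be the set of linear combinations of at most `n` basis vectors.
Then every closed infinite dimensional subspace `Y` of `X` is `1`-far from the
approximation scheme `(Σₙ)`: for every `n` and every `c > 1` there is `y ∈ Y` with
`‖y‖ < c` and `‖y - s‖ > 1 / c` for every `s ∈ Σₙ`. -/
theorem unconditional_basis_one_far
    {X : Type*} [NormedAddCommGroup X] [NormedSpace ℝ X] [CompleteSpace X]
    (e : ℕ → X)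
    (hbasis : ∀ x : X, ∃! a : ℕ → ℝ,
      Tendsto (fun N => ∑ i ∈ Finset.range N, a i • e i) atTop (nhds x))
    (hunc : ∀ (a b : ℕ → ℝ) (s : Finset ℕ), (∀ i ∈ s, |b i| ≤ 1) →
      ‖∑ i ∈ s, (a i * b i) • e i‖ ≤ ‖∑ i ∈ s, a i • e i‖)
    (Y : Submodule ℝ X) (hYc : IsClosed (Y : Set X)) (hY : ¬ FiniteDimensional ℝ Y)
    (n : ℕ) (c : ℝ) (hc : 1 < c) :
    ∃ y ∈ Y, ‖y‖ < c ∧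
      ∀ x ∈ {x : X | ∃ s : Finset ℕ, s.card ≤ n ∧ x ∈ Submodule.span ℝ (e '' ↑s)},
        ‖y - x‖ > 1 / c := by
  classical
  -- coordinate functionals
  set coords : X → ℕ → ℝ := fun x => (hbasis x).choose with hcoordsdef
  have hspec : ∀ x : X, Tendsto (fun K => ∑ i ∈ Finset.range K, coords x i • e i)
      atTop (nhds x) := fun x => (hbasis x).choose_spec.1
  have huniq : ∀ (x : X) (a : ℕ → ℝ),
      Tendsto (fun K => ∑ i ∈ Finset.range K, a i • e i) atTop (nhds x) →
      a = coords x := fun x a h => (hbasis x).choose_spec.2 a h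
  have hadd : ∀ u v : X, coords (u + v) = fun i => coords u i + coords v i := by
    intro u v
    refine ((huniq (u + v) _ ?_)).symm
    have h1 : (fun K => ∑ i ∈ Finset.range K, (coords u i + coords v i) • e i)
        = fun K => (∑ i ∈ Finset.range K, coords u i • e i)
          + ∑ i ∈ Finset.range K, coords v i • e i := by
      funext K
      rw [← Finset.sum_add_distrib]
      exact Finset.sum_congr rfl fun i _ => add_smul _ _ _
    rw [h1]
    exact (hspec u).add (hspec v)
  have hsmul : ∀ (t : ℝ) (u : X), coords (t • u) = fun i => t * coords u i := by
    intro t u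
    refine ((huniq (t • u) _ ?_)).symm
    have h1 : (fun K => ∑ i ∈ Finset.range K, (t * coords u i) • e i)
        = fun K => t • ∑ i ∈ Finset.range K, coords u i • e i := by
      funext K
      rw [Finset.smul_sum]
      exact Finset.sum_congr rfl fun i _ => (smul_smul t (coords u i) (e i)).symm
    rw [h1]
    exact (hspec u).const_smul t
  -- from infinite dimensionality: unit vectors in Y with many vanishing coordinates
  have hkernel : ∀ N : ℕ, ∃ yy : X, yy ∈ Y ∧ ‖yy‖ = 1 ∧ ∀ i ≤ N, coords yy i = 0 := by
    intro N
    set φ : Y →ₗ[ℝ] (Fin (N + 1) → ℝ) :=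
      { toFun := fun v i => coords (v : X) i.val
        map_add' := by
          intro u v
          funext i
          show coords ((u : X) + (v : X)) i.val = coords (u : X) i.val + coords (v : X) i.val
          rw [hadd]
        map_smul' := by
          intro t v
          funext i
          show coords (t • (v : X)) i.val = _
          rw [hsmul]
          rfl } with hφ
    have hker : LinearMap.ker φ ≠ ⊥ := by
      intro hbot
      exact hY (FiniteDimensional.of_injective φ (LinearMap.ker_eq_bot.1 hbot))
    obtain ⟨v, hvker, hvne⟩ := (Submodule.ne_bot_iff _).1 hker
    have hv0 : (v : X) ≠ 0 := fun h => hvne (by exact_mod_cast Subtype.ext h)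
    have hvn : ‖(v : X)‖ ≠ 0 := norm_ne_zero_iff.2 hv0
    refine ⟨‖(v : X)‖⁻¹ • (v : X), Submodule.smul_mem _ _ v.2, ?_, ?_⟩
    · rw [norm_smul, norm_inv, norm_norm, inv_mul_cancel₀ hvn]
    · intro i hi
      rw [hsmul]
      have hφv : φ v = 0 := LinearMap.mem_ker.1 hvker
      have h2 := congrFun hφv ⟨i, Nat.lt_succ_of_le hi⟩
      have h3 : coords (↑v : X) i = 0 := h2
      show ‖(v : X)‖⁻¹ * coords (↑v : X) i = 0
      rw [h3, mul_zero]
  -- blocks: unit vectors in Y almost supported on disjoint intervals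
  have hblock : ∀ (N₀ : ℕ) (ε : ℝ), 0 < ε → ∃ (yy : X) (M : ℕ), N₀ < M ∧ yy ∈ Y ∧
      ‖yy‖ = 1 ∧ (∀ i ≤ N₀, coords yy i = 0) ∧
      ‖yy - ∑ i ∈ Finset.Ioc N₀ M, coords yy i • e i‖ < ε := by
    intro N₀ ε hε
    obtain ⟨yy, hyY, hynorm, hycoord⟩ := hkernel N₀
    obtain ⟨K₀, hK₀⟩ := Metric.tendsto_atTop.1 (hspec yy) ε hε
    refine ⟨yy, max K₀ (N₀ + 1), lt_of_lt_of_le (Nat.lt_succ_self _) (le_max_right _ _),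
      hyY, hynorm, hycoord, ?_⟩
    set M := max K₀ (N₀ + 1) with hM
    have hsum : ∑ i ∈ Finset.Ioc N₀ M, coords yy i • e i
        = ∑ i ∈ Finset.range (M + 1), coords yy i • e i := by
      refine Finset.sum_subset ?_ ?_
      · intro i hi
        rw [Finset.mem_range]
        exact Nat.lt_succ_of_le (Finset.mem_Ioc.1 hi).2
      · intro i hi hni
        have hiM : i ≤ M := Nat.lt_succ_iff.1 (Finset.mem_range.1 hi)
        have : i ≤ N₀ := by
          by_contra h
          exact hni (Finset.mem_Ioc.2 ⟨Nat.lt_of_not_le h, hiM⟩)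
        rw [hycoord i this, zero_smul]
    rw [hsum]
    have := hK₀ (M + 1) (le_trans (le_max_left _ _) (Nat.le_succ _))
    rw [dist_eq_norm] at this
    rw [norm_sub_rev]
    exact this
  -- numeric setup
  have hsc : 1 < Real.sqrt c := by
    rw [show (1:ℝ) = Real.sqrt 1 from (Real.sqrt_one).symm]
    exact Real.sqrt_lt_sqrt (by norm_num) hc
  have hscpos : 0 < Real.sqrt c := by linarith
  have hcc : 1 < c * Real.sqrt c := by nlinarith
  set β : ℝ := 1 / (c * Real.sqrt c) with hβdef
  have hβpos : 0 < β := by positivity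
  have hβlt : β < 1 := by
    rw [hβdef, div_lt_one (by linarith)]
    exact hcc
  set η : ℝ := (1 - β) / 6 with hηdef
  have hηpos : 0 < η := by rw [hηdef]; linarith
  have hηlt : η < 1 / 6 := by rw [hηdef]; linarith
  set εb : ℕ → ℝ := fun j => η / 2 ^ (j + 2) with hεbdef
  have hεbpos : ∀ j, 0 < εb j := by intro j; rw [hεbdef]; positivity
  have hεble : ∀ j, εb j ≤ η / 4 := by
    intro j
    rw [hεbdef]
    apply div_le_div_of_nonneg_left (le_of_lt hηpos) (by norm_num)
    calc (4:ℝ) = 2 ^ 2 := by norm_num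
    _ ≤ 2 ^ (j + 2) := by
        apply pow_le_pow_right₀ (by norm_num)
        omega
  -- construct the block sequence
  have hstep : ∀ (N₀ j : ℕ), ∃ (yy : X) (M : ℕ), N₀ < M ∧ yy ∈ Y ∧
      ‖yy‖ = 1 ∧ (∀ i ≤ N₀, coords yy i = 0) ∧
      ‖yy - ∑ i ∈ Finset.Ioc N₀ M, coords yy i • e i‖ < εb j :=
    fun N₀ j => hblock N₀ (εb j) (hεbpos j)
  choose yf Mf hlt hmemY hnorm1 hcoordz happrox using hstep
  set Nf : ℕ → ℕ := fun j => Nat.rec 0 (fun j' ih => Mf ih j') j with hNfdef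
  have hNfs : ∀ j, Nf (j + 1) = Mf (Nf j) j := fun j => rfl
  set yb : ℕ → X := fun j => yf (Nf j) j with hybdef
  set blk : ℕ → Finset ℕ := fun j => Finset.Ioc (Nf j) (Nf (j + 1)) with hblkdef
  have hNlt : ∀ j, Nf j < Nf (j + 1) := fun j => hlt (Nf j) j
  have hNmono : StrictMono Nf := strictMono_nat_of_lt_succ hNlt
  have hblkmem : ∀ j i, i ∈ blk j ↔ (Nf j < i ∧ i ≤ Nf (j + 1)) := by
    intro j i; rw [hblkdef]; exact Finset.mem_Ioc
  have hdisj : ∀ j k, j ≠ k → Disjoint (blk j) (blk k) := by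
    have key : ∀ j k, j < k → Disjoint (blk j) (blk k) := by
      intro j k hjk
      rw [Finset.disjoint_left]
      intro i hij hik
      have h1 : i ≤ Nf (j + 1) := ((hblkmem j i).1 hij).2
      have h2 : Nf k < i := ((hblkmem k i).1 hik).1
      have h3 : Nf (j + 1) ≤ Nf k := hNmono.monotone hjk
      omega
    intro j k hjk
    rcases Nat.lt_or_ge j k with h | h
    · exact key j k h
    · exact (key k j (lt_of_le_of_ne h (Ne.symm hjk))).symm
  have hybY : ∀ j, yb j ∈ Y := fun j => hmemY (Nf j) j
  have hybnorm : ∀ j, ‖yb j‖ = 1 := fun j => hnorm1 (Nf j) j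
  -- the global coefficient function
  set C : ℕ → ℝ := fun i => if h : ∃ j, i ∈ blk j then coords (yb h.choose) i else 0
    with hCdef
  have hCblk : ∀ j i, i ∈ blk j → C i = coords (yb j) i := by
    intro j i hi
    have hex : ∃ j', i ∈ blk j' := ⟨j, hi⟩
    rw [hCdef]
    simp only [dif_pos hex]
    have hchoose : hex.choose = j := by
      by_contra h
      exact Finset.disjoint_left.1 (hdisj _ _ h) hex.choose_spec hi
    rw [hchoose]
  set xb : ℕ → X := fun j => ∑ i ∈ blk j, C i • e i with hxbdef
  have hxb_eq : ∀ j, xb j = ∑ i ∈ blk j, coords (yb j) i • e i := by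
    intro j
    exact Finset.sum_congr rfl fun i hi => by rw [hCblk j i hi]
  have hyx : ∀ j, ‖yb j - xb j‖ < εb j := by
    intro j
    rw [hxb_eq j]
    exact happrox (Nf j) j
  have hxub : ∀ j, ‖xb j‖ ≤ 2 := by
    intro j
    have h1 := abs_norm_sub_norm_le (yb j) (xb j)
    have h2 := hyx j
    have h3 := hεble j
    rw [hybnorm j] at h1
    have := abs_le.1 h1
    linarith [this.1, this.2, hηlt]
  have hxlb : ∀ j, (1:ℝ)/2 ≤ ‖xb j‖ := by
    intro j
    have h1 := abs_norm_sub_norm_le (yb j) (xb j)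
    have h2 := hyx j
    have h3 := hεble j
    rw [hybnorm j] at h1
    have := abs_le.1 h1
    linarith [this.1, this.2, hηlt]
  -- unconditionality: coordinate-restriction monotonicity
  have hmono0 : ∀ (cc : ℕ → ℝ) (G F : Finset ℕ), G ⊆ F →
      ‖∑ i ∈ G, cc i • e i‖ ≤ ‖∑ i ∈ F, cc i • e i‖ := by
    intro cc G F hGF
    have hb : ∀ i ∈ F, |(fun i => if i ∈ G then (1:ℝ) else 0) i| ≤ 1 := by
      intro i _
      by_cases h : i ∈ G <;> simp [h]
    have h1 := hunc cc (fun i => if i ∈ G then (1:ℝ) else 0) F hb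
    have h2 : ∑ i ∈ F, (cc i * if i ∈ G then (1:ℝ) else 0) • e i
        = ∑ i ∈ G, cc i • e i := by
      rw [show ∑ i ∈ F, (cc i * if i ∈ G then (1:ℝ) else 0) • e i
          = ∑ i ∈ F, (if i ∈ G then cc i • e i else 0) from
        Finset.sum_congr rfl fun i _ => by by_cases h : i ∈ G <;> simp [h]]
      rw [Finset.sum_ite_mem, Finset.inter_eq_right.2 hGF]
    rw [h2] at h1
    exact h1
  -- monotonicity for block sums
  have hpd : ∀ F : Finset ℕ, (↑F : Set ℕ).PairwiseDisjoint blk :=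
    fun F a _ b _ hab => hdisj a b hab
  have hbiU : ∀ F : Finset ℕ, ∑ j ∈ F, xb j = ∑ i ∈ F.biUnion blk, C i • e i := by
    intro F
    rw [Finset.sum_biUnion (hpd F)]
  have hmono : ∀ (G F : Finset ℕ), G ⊆ F → ‖∑ j ∈ G, xb j‖ ≤ ‖∑ j ∈ F, xb j‖ := by
    intro G F hGF
    rw [hbiU G, hbiU F]
    exact hmono0 C _ _ (Finset.biUnion_subset_biUnion_of_subset_left blk hGF)
  -- select a good finite family of blocks
  obtain ⟨F, hRlb, hFprop⟩ := exists_good_family xb hxlb hxub hmono n hηpos (by linarith)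
  set R : ℝ := ‖∑ j ∈ F, xb j‖ with hRdef
  set z : X := ∑ j ∈ F, yb j with hzdef
  have hzY : z ∈ Y := Submodule.sum_mem _ fun j _ => hybY j
  have hsub : F ⊆ Finset.range (F.sup id + 1) :=
    fun i hi => Finset.mem_range.2 (Nat.lt_succ_of_le (Finset.le_sup (f := id) hi))
  have hsumεb : ∑ j ∈ F, εb j ≤ η := by
    have h1 : ∀ j, εb j = (η / 4) * (1 / 2 : ℝ) ^ j := by
      intro j
      show η / 2 ^ (j + 2) = (η / 4) * (1 / 2 : ℝ) ^ j
      rw [div_pow, one_pow, pow_add, div_mul_eq_div_div, div_right_comm, mul_one_div]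
      norm_num
    calc ∑ j ∈ F, εb j = ∑ j ∈ F, (η / 4) * (1 / 2 : ℝ) ^ j :=
        Finset.sum_congr rfl fun j _ => h1 j
    _ ≤ ∑ j ∈ Finset.range (F.sup id + 1), (η / 4) * (1 / 2 : ℝ) ^ j :=
        Finset.sum_le_sum_of_subset_of_nonneg hsub (fun j _ _ => by positivity)
    _ = (η / 4) * ∑ j ∈ Finset.range (F.sup id + 1), (1 / 2 : ℝ) ^ j := by
        rw [Finset.mul_sum]
    _ ≤ (η / 4) * 2 :=
        mul_le_mul_of_nonneg_left (sum_geometric_two_le _) (by positivity)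
    _ ≤ η := by linarith
  have hzx : ‖z - ∑ j ∈ F, xb j‖ ≤ η := by
    rw [hzdef, ← Finset.sum_sub_distrib]
    calc ‖∑ j ∈ F, (yb j - xb j)‖ ≤ ∑ j ∈ F, ‖yb j - xb j‖ := norm_sum_le _ _
    _ ≤ ∑ j ∈ F, εb j := Finset.sum_le_sum fun j _ => le_of_lt (hyx j)
    _ ≤ η := hsumεb
  -- the core estimate: the block sum is far from every element of Σₙ
  have hcore : ∀ w : X, (∃ A : Finset ℕ, A.card ≤ n ∧ w ∈ Submodule.span ℝ (e '' ↑A)) →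
      (1 - η) * R ≤ ‖(∑ j ∈ F, xb j) - w‖ := by
    rintro w ⟨A, hAcard, hAspan⟩
    obtain ⟨l, hlsupp, hlw⟩ := (Finsupp.mem_span_image_iff_linearCombination ℝ).1 hAspan
    have hlsup : l.support ⊆ A := fun i hi =>
      by exact_mod_cast (Finsupp.mem_supported ℝ l).1 hlsupp hi
    have hw_eq : w = ∑ i ∈ A, l i • e i := by
      rw [← hlw, Finsupp.linearCombination_apply, Finsupp.sum]
      exact Finset.sum_subset hlsup (fun i _ hni => by
        rw [Finsupp.notMem_support_iff.1 hni, zero_smul])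
    set G := F.filter (fun j => Disjoint (blk j) A) with hGdef
    have hGF : G ⊆ F := Finset.filter_subset _ _
    have hcardFG : (F \ G).card ≤ A.card := by
      set f : ℕ → ℕ := fun j => if h : (blk j ∩ A).Nonempty then h.choose else 0
        with hfdef
      have hf : ∀ j ∈ F \ G, f j ∈ blk j ∩ A := by
        intro j hj
        rcases Finset.mem_sdiff.1 hj with ⟨hjF, hjG⟩
        have hnd : ¬ Disjoint (blk j) A := fun hd =>
          hjG (Finset.mem_filter.2 ⟨hjF, hd⟩)
        have hne : (blk j ∩ A).Nonempty := Finset.not_disjoint_iff_nonempty_inter.1 hnd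
        rw [hfdef]
        simp only [dif_pos hne]
        exact hne.choose_spec
      apply Finset.card_le_card_of_injOn f
      · intro j hj
        exact (Finset.mem_inter.1 (hf j hj)).2
      · intro j hj j' hj' hff
        by_contra hne
        have h1 : f j ∈ blk j := (Finset.mem_inter.1 (hf j hj)).1
        have h2 : f j' ∈ blk j' := (Finset.mem_inter.1 (hf j' hj')).1
        rw [hff] at h1
        exact Finset.disjoint_left.1 (hdisj j' j (Ne.symm hne)) h2 h1
    have hGbound := hFprop G hGF (le_trans hcardFG hAcard)
    have hVU : G.biUnion blk ⊆ F.biUnion blk :=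
      Finset.biUnion_subset_biUnion_of_subset_left blk hGF
    have hVA : Disjoint (G.biUnion blk) A := by
      rw [Finset.disjoint_left]
      intro i hi hiA
      obtain ⟨j, hjG, hiblk⟩ := Finset.mem_biUnion.1 hi
      exact Finset.disjoint_left.1 (Finset.mem_filter.1 hjG).2 hiblk hiA
    calc (1 - η) * R ≤ ‖∑ j ∈ G, xb j‖ := hGbound
    _ = ‖∑ i ∈ G.biUnion blk, C i • e i‖ := by rw [hbiU G]
    _ ≤ ‖(∑ i ∈ F.biUnion blk, C i • e i) - ∑ i ∈ A, (fun i => l i) i • e i‖ :=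
        norm_restrict_sub_le e hmono0 C (fun i => l i) _ A _ hVU hVA
    _ = ‖(∑ j ∈ F, xb j) - w‖ := by rw [← hbiU F, ← hw_eq]
  -- final assembly
  have hRη : (0:ℝ) < R + η := by linarith
  set θ : ℝ := Real.sqrt c / (R + η) with hθdef
  have hθpos : 0 < θ := div_pos hscpos hRη
  refine ⟨θ • z, Submodule.smul_mem _ _ hzY, ?_, ?_⟩
  · have h1 : ‖θ • z‖ = θ * ‖z‖ := by
      rw [norm_smul, Real.norm_eq_abs, abs_of_pos hθpos]
    have h2 : ‖z‖ ≤ R + η := by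
      have hzz : z = (∑ j ∈ F, xb j) + (z - ∑ j ∈ F, xb j) := by abel
      calc ‖z‖ = ‖(∑ j ∈ F, xb j) + (z - ∑ j ∈ F, xb j)‖ := by rw [← hzz]
      _ ≤ ‖∑ j ∈ F, xb j‖ + ‖z - ∑ j ∈ F, xb j‖ := norm_add_le _ _
      _ ≤ R + η := by rw [← hRdef]; linarith
    have h3 : θ * (R + η) = Real.sqrt c := div_mul_cancel₀ _ (ne_of_gt hRη)
    have h4 : Real.sqrt c < c := (Real.sqrt_lt' (by linarith)).2 (by nlinarith)
    calc ‖θ • z‖ = θ * ‖z‖ := h1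
    _ ≤ θ * (R + η) := mul_le_mul_of_nonneg_left h2 (le_of_lt hθpos)
    _ = Real.sqrt c := h3
    _ < c := h4
  · intro s hs
    obtain ⟨A, hA1, hA2⟩ := hs
    set w : X := θ⁻¹ • s with hwdef
    have hwmem : ∃ A : Finset ℕ, A.card ≤ n ∧ w ∈ Submodule.span ℝ (e '' ↑A) :=
      ⟨A, hA1, Submodule.smul_mem _ _ hA2⟩
    have h1 : (1 - η) * R - η ≤ ‖z - w‖ := by
      have ha := hcore w hwmem
      have hb : ‖(∑ j ∈ F, xb j) - w‖ ≤ ‖(∑ j ∈ F, xb j) - z‖ + ‖z - w‖ := by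
        have := dist_triangle (∑ j ∈ F, xb j) z w
        rwa [dist_eq_norm, dist_eq_norm, dist_eq_norm] at this
      have hcz : ‖(∑ j ∈ F, xb j) - z‖ ≤ η := by rw [norm_sub_rev]; exact hzx
      linarith
    have hkey : (1 - 5 * η) * (R + η) ≤ (1 - η) * R - η := by nlinarith [hRlb, hηpos]
    have h2 : θ • z - s = θ • (z - w) := by
      rw [smul_sub, hwdef, smul_inv_smul₀ (ne_of_gt hθpos)]
    have hβη : β < 1 - 5 * η := by rw [hηdef]; linarith
    have hstep1 : 1 / c = Real.sqrt c * β := by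
      rw [hβdef]
      field_simp
    calc 1 / c = Real.sqrt c * β := hstep1
    _ < Real.sqrt c * (1 - 5 * η) := by
        exact mul_lt_mul_of_pos_left hβη hscpos
    _ = θ * ((1 - 5 * η) * (R + η)) := by
        rw [hθdef]
        field_simp
    _ ≤ θ * ‖z - w‖ :=
        mul_le_mul_of_nonneg_left (le_trans hkey h1) (le_of_lt hθpos)
    _ = ‖θ • z - s‖ := by
        rw [h2, norm_smul, Real.norm_eq_abs, abs_of_pos hθpos]
end
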